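/- arXiv:2308.12768 — 3 statements merged into one kernel-verified Lean document; each statement's English description precedes it below -/
import Mathlib

section
/- Let w, v ∈ W_p be such that w·λ ≺ ws·λ. If w·μ ≺ v·μ, then w·λ ≺ v·λ. -/
noncomputable section

/-- The real vector space `X ⊗ ℝ`, where `X` is a free abelian group of rank `r`. -/
abbrev Vr (r : ℕ) := Fin r → ℝ

/-- The lattice `X` (identified with `ℤ^r`); its dual lattice `Y` is identified with
the same coordinate lattice via the standard perfect pairing. -/
abbrev Lr (r : ℕ) := Fin r → ℤ

/-- The embedding `X → X ⊗ ℝ`. -/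
def toV {r : ℕ} (x : Lr r) : Vr r := fun i => (x i : ℝ)

/-- The perfect pairing `⟨·,·⟩ : X × Y → ℤ`. -/
def pairZ {r : ℕ} (x y : Lr r) : ℤ := ∑ i, x i * y i

/-- The real extension of the pairing to `(X ⊗ ℝ) × Y → ℝ`. -/
def pairR {r : ℕ} (v : Vr r) (y : Lr r) : ℝ := ∑ i, v i * (y i : ℝ)

/-- The subgroup `ℤI` of `X` generated by a subset `I ⊆ X`. -/
def ZI {r : ℕ} (I : Finset (Lr r)) : AddSubgroup (Lr r) :=
  AddSubgroup.closure (I : Set (Lr r))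

/-- The data of a reduced crystallographic root system `Φ ⊆ X` with a fixed positive
system `Φ⁺`, simple roots `Φ_s`, coroots `α∨ ∈ Y`, a prime `p`, and the half-sum
`ρ ∈ X` of the positive roots. -/
structure ARDatum (r : ℕ) where
  Φ : Finset (Lr r)
  pos : Finset (Lr r)
  simples : Finset (Lr r)
  coroot : Lr r → Lr r
  p : ℕ
  ρ : Lr r
  hp : p.Prime
  root_ne_zero : ∀ α ∈ Φ, α ≠ 0
  pos_sub : pos ⊆ Φ
  simples_sub : simples ⊆ pos
  pos_or_neg : ∀ α ∈ Φ, α ∈ pos ∨ -α ∈ pos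
  not_pos_and_neg : ∀ α ∈ pos, -α ∉ pos
  neg_mem : ∀ α ∈ Φ, -α ∈ Φ
  root_coroot_two : ∀ α ∈ Φ, pairZ α (coroot α) = 2
  reflect_root_mem : ∀ α ∈ Φ, ∀ β ∈ Φ, β - pairZ β (coroot α) • α ∈ Φ
  reflect_coroot_mem : ∀ α ∈ Φ, ∀ β ∈ Φ,
    coroot β - pairZ α (coroot β) • coroot α ∈ coroot '' (Φ : Set (Lr r))
  reduced : ∀ α ∈ Φ, ∀ c : ℤ, c • α ∈ Φ → c = 1 ∨ c = -1
  pos_sum_simples : ∀ β ∈ pos, ∃ c : Lr r → ℕ, β = ∑ α ∈ simples, (c α : ℤ) • α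
  two_rho : (2 : ℤ) • ρ = ∑ α ∈ pos, α

namespace ARDatum

/-- The group of affine transformations of `X ⊗ ℝ`. -/
abbrev G (r : ℕ) := (Vr r) ≃ᵃ[ℝ] (Vr r)

variable {r : ℕ} (D : ARDatum r)

/-- `g` is the affine reflection `s_{α,mp} : v ↦ v − (⟨v,α∨⟩ − mp)·α`. -/
def IsRefl (α : Lr r) (m : ℤ) (g : G r) : Prop :=
  ∀ v : Vr r, g v = v - (pairR v (D.coroot α) - (m : ℝ) * (D.p : ℝ)) • toV α

/-- `g` is the linear reflection `s_α : v ↦ v − ⟨v,α∨⟩·α`. -/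
def IsLinRefl (α : Lr r) (g : G r) : Prop := D.IsRefl α 0 g

/-- `g` is the translation `t_{α,mp} : v ↦ v + mp·α`. -/
def IsTransl (α : Lr r) (m : ℤ) (g : G r) : Prop :=
  ∀ v : Vr r, g v = v + ((m : ℝ) * (D.p : ℝ)) • toV α

/-- The affine Weyl group `W_p`, generated by the `s_α` and the `t_{α,mp}`
for `α ∈ Φ⁺`, `m ∈ ℤ`. -/
def Wp : Subgroup (G r) :=
  Subgroup.closure ({g | ∃ α ∈ D.pos, D.IsLinRefl α g} ∪
    {g | ∃ α ∈ D.pos, ∃ m : ℤ, D.IsTransl α m g})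

/-- The finite Weyl group `W`, generated by the `s_α` for `α ∈ Φ⁺`. -/
def W : Subgroup (G r) :=
  Subgroup.closure {g | ∃ α ∈ D.pos, D.IsLinRefl α g}

/-- The subgroup `W_{I,p}` generated by the `s_α` and `t_{α,mp}` for `α ∈ I`. -/
def WIp (I : Finset (Lr r)) : Subgroup (G r) :=
  Subgroup.closure ({g | ∃ α ∈ I, D.IsLinRefl α g} ∪
    {g | ∃ α ∈ I, ∃ m : ℤ, D.IsTransl α m g})

/-- The subgroup `W_I` of `W` generated by the `s_α` for `α ∈ I`. -/
def WI (I : Finset (Lr r)) : Subgroup (G r) :=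
  Subgroup.closure {g | ∃ α ∈ I, D.IsLinRefl α g}

/-- `g` is a reflection (the reflections of `W_p` are exactly the `s_{α,mp}`). -/
def IsReflection (g : G r) : Prop := ∃ α ∈ D.pos, ∃ m : ℤ, D.IsRefl α m g

/-- The dot action `w·v := w(v+ρ) − ρ`. -/
def dot (g : G r) (v : Vr r) : Vr r := g (v + toV D.ρ) - toV D.ρ

/-- The hyperplane `H_{α,n} = {v : ⟨v+ρ,α∨⟩ = np}`. -/
def Hyp (α : Lr r) (n : ℤ) : Set (Vr r) :=
  {v | pairR (v + toV D.ρ) (D.coroot α) = (n : ℝ) * (D.p : ℝ)}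

/-- The complement of the union of all the hyperplanes `H_{α,n}`. -/
def Reg : Set (Vr r) :=
  {v | ∀ α ∈ D.pos, ∀ n : ℤ, pairR (v + toV D.ρ) (D.coroot α) ≠ (n : ℝ) * (D.p : ℝ)}

/-- The alcove containing `v` (the connected component of `v` in the complement of
the hyperplanes). -/
def alcoveOf (v : Vr r) : Set (Vr r) := connectedComponentIn D.Reg v

/-- `H_{α,n}` contains a wall of `A`, i.e. the interior of `closure A ∩ H_{α,n}`
inside the hyperplane `H_{α,n}` is nonempty. -/
def HasWall (A : Set (Vr r)) (α : Lr r) (n : ℤ) : Prop :=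
  ∃ x ∈ closure A ∩ D.Hyp α n, ∃ ε > 0,
    ∀ y ∈ D.Hyp α n, dist y x < ε → y ∈ closure A

/-- The fundamental alcove `C`. -/
def FundC : Set (Vr r) :=
  {v | ∀ α ∈ D.pos, 0 < pairR (v + toV D.ρ) (D.coroot α) ∧
    pairR (v + toV D.ρ) (D.coroot α) < (D.p : ℝ)}

/-- The closure `C̄` of the fundamental alcove. -/
def FundCBar : Set (Vr r) :=
  {v | ∀ α ∈ D.pos, 0 ≤ pairR (v + toV D.ρ) (D.coroot α) ∧
    pairR (v + toV D.ρ) (D.coroot α) ≤ (D.p : ℝ)}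

/-- The region `C_I`. -/
def CI (I : Finset (Lr r)) : Set (Vr r) :=
  {v | ∀ α ∈ D.pos, α ∈ ZI I → 0 < pairR (v + toV D.ρ) (D.coroot α) ∧
    pairR (v + toV D.ρ) (D.coroot α) < (D.p : ℝ)}

/-- The region `C̄_I`. -/
def CIBar (I : Finset (Lr r)) : Set (Vr r) :=
  {v | ∀ α ∈ D.pos, α ∈ ZI I → 0 ≤ pairR (v + toV D.ρ) (D.coroot α) ∧
    pairR (v + toV D.ρ) (D.coroot α) ≤ (D.p : ℝ)}

/-- `S_p`: the reflections of `W_p` in the walls of the fundamental alcove `C`. -/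
def Sp : Set (G r) :=
  {g | g ∈ D.Wp ∧ ∃ α ∈ D.pos, ∃ m : ℤ, D.IsRefl α m g ∧ D.HasWall D.FundC α m}

/-- One step of the order `⪯` (`↑`): `s_{α,mp}·u ⪯ u` whenever `⟨u+ρ,α∨⟩ ≥ mp`. -/
def UpStep (v u : Vr r) : Prop :=
  ∃ α ∈ D.pos, ∃ m : ℤ, (m : ℝ) * (D.p : ℝ) ≤ pairR (u + toV D.ρ) (D.coroot α) ∧
    v = u - (pairR (u + toV D.ρ) (D.coroot α) - (m : ℝ) * (D.p : ℝ)) • toV α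

/-- The order `⪯` (`↑`): the reflexive-transitive closure of `UpStep`. -/
def Up : Vr r → Vr r → Prop := Relation.ReflTransGen D.UpStep

/-- The strict order `≺`. -/
def Ups (v u : Vr r) : Prop := D.Up v u ∧ v ≠ u

/-- The order `≤`: `v ≤ u` iff `u − v` is a `ℤ≥0`-combination of the simple roots. -/
def Le (v u : Vr r) : Prop :=
  ∃ c : Lr r → ℕ, u - v = ∑ α ∈ D.simples, (c α : ℝ) • toV α

/-- The strict order `<`. -/
def Lt (v u : Vr r) : Prop := D.Le v u ∧ v ≠ u

/-- `X₊ = {ν ∈ X : ⟨ν+ρ,α∨⟩ ≥ 0 for all α ∈ Φ⁺}`, viewed inside `X ⊗ ℝ`. -/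
def XplusR : Set (Vr r) :=
  {v | (∃ ν : Lr r, toV ν = v) ∧ ∀ α ∈ D.pos, 0 ≤ pairR (v + toV D.ρ) (D.coroot α)}

/-- `n_α(v)`: the unique integer with `n_α(v)·p < ⟨v+ρ,α∨⟩ < (n_α(v)+1)·p`
(for `v` on none of the hyperplanes), realised as a floor. -/
def nfl (v : Vr r) (α : Lr r) : ℤ := ⌊pairR (v + toV D.ρ) (D.coroot α) / (D.p : ℝ)⌋

/-- `d(v) = ∑_{α ∈ Φ⁺} n_α(v)`. -/
def dfn (v : Vr r) : ℤ := ∑ α ∈ D.pos, D.nfl v α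

/-- The sublattice `pX` of `X`. -/
def pLat : AddSubgroup (Lr r) where
  carrier := {x | ∃ y : Lr r, x = (D.p : ℤ) • y}
  zero_mem' := ⟨0, by simp⟩
  add_mem' := by rintro a b ⟨y, rfl⟩ ⟨z, rfl⟩; exact ⟨y + z, (smul_add _ _ _).symm⟩
  neg_mem' := by rintro a ⟨y, rfl⟩; exact ⟨-y, (smul_neg _ _).symm⟩

/-- The orbit of `ν + pX` under the dot action of `W_I` on `X/pX`. -/
def dotOrbit (I : Finset (Lr r)) (ν : Lr r) : Set (Lr r ⧸ D.pLat) :=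
  {c | ∃ w ∈ D.WI I, ∃ ν' : Lr r, toV ν' = D.dot w (toV ν) ∧
    c = QuotientAddGroup.mk ν'}

end ARDatum

namespace StmtAux

open ARDatum

variable {r : ℕ}

/-! ### Linearity lemmas for the pairings -/

lemma pairR_add_left (u v : Vr r) (c : Lr r) :
    pairR (u + v) c = pairR u c + pairR v c := by
  simp [pairR, add_mul, Finset.sum_add_distrib]

lemma pairR_sub_left (u v : Vr r) (c : Lr r) :
    pairR (u - v) c = pairR u c - pairR v c := by
  simp [pairR, sub_mul, Finset.sum_sub_distrib]

lemma pairR_smul_left (a : ℝ) (v : Vr r) (c : Lr r) :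
    pairR (a • v) c = a * pairR v c := by
  simp [pairR, Finset.mul_sum, mul_assoc]

lemma pairR_toV (x c : Lr r) : pairR (toV x) c = (pairZ x c : ℝ) := by
  unfold pairR pairZ toV
  push_cast
  rfl

lemma pairR_sub_zsmul_right (v : Vr r) (c d : Lr r) (z : ℤ) :
    pairR v (c - z • d) = pairR v c - (z : ℝ) * pairR v d := by
  simp [pairR, mul_sub, Finset.sum_sub_distrib, Finset.mul_sum]
  ring_nf
  congr 1
  funext i
  push_cast
  ring

lemma pairR_neg_right (v : Vr r) (c : Lr r) : pairR v (-c) = -pairR v c := by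
  simp [pairR]

lemma pairZ_add_left (x y c : Lr r) : pairZ (x + y) c = pairZ x c + pairZ y c := by
  simp [pairZ, add_mul, Finset.sum_add_distrib]

lemma pairZ_sub_left (x y c : Lr r) : pairZ (x - y) c = pairZ x c - pairZ y c := by
  simp [pairZ, sub_mul, Finset.sum_sub_distrib]

lemma pairZ_smul_left (z : ℤ) (x c : Lr r) : pairZ (z • x) c = z * pairZ x c := by
  simp [pairZ, Finset.mul_sum, mul_assoc]

lemma pairZ_neg_left (x c : Lr r) : pairZ (-x) c = -pairZ x c := by
  simp [pairZ]

lemma pairZ_add_right (x c d : Lr r) : pairZ x (c + d) = pairZ x c + pairZ x d := by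
  simp [pairZ, mul_add, Finset.sum_add_distrib]

lemma pairZ_smul_right (z : ℤ) (x c : Lr r) : pairZ x (z • c) = z * pairZ x c := by
  simp [pairZ, Finset.mul_sum]
  apply Finset.sum_congr rfl
  intro i _
  ring

/-! ### The reflections `s_{β,mp}` as affine equivalences -/

variable (D : ARDatum r)

/-- The linear reflection `v ↦ v - ⟨v,β∨⟩ β` as a linear map. -/
def rlin (β : Lr r) : Vr r →ₗ[ℝ] Vr r where
  toFun v := v - pairR v (D.coroot β) • toV β
  map_add' u v := by
    show (u + v) - pairR (u + v) (D.coroot β) • toV β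
        = (u - pairR u (D.coroot β) • toV β) + (v - pairR v (D.coroot β) • toV β)
    rw [pairR_add_left, add_smul]; abel
  map_smul' a v := by
    show (a • v) - pairR (a • v) (D.coroot β) • toV β
        = a • (v - pairR v (D.coroot β) • toV β)
    rw [pairR_smul_left, smul_sub, smul_smul]

lemma rlin_invol {β : Lr r} (hβ : pairZ β (D.coroot β) = 2) :
    Function.Involutive (rlin D β) := by
  intro v
  have hb : pairR (toV β) (D.coroot β) = 2 := by rw [pairR_toV, hβ]; norm_num
  show (v - pairR v (D.coroot β) • toV β) -
      pairR (v - pairR v (D.coroot β) • toV β) (D.coroot β) • toV β = v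
  rw [pairR_sub_left, pairR_smul_left, hb]
  have h : pairR v (D.coroot β) - pairR v (D.coroot β) * 2 = -pairR v (D.coroot β) := by
    ring
  rw [h, neg_smul]
  abel

/-- The affine reflection `s_{β,mp}` as an affine equivalence. -/
def rEquiv {β : Lr r} (hβ : pairZ β (D.coroot β) = 2) (m : ℤ) : G r :=
  (LinearEquiv.ofInvolutive (rlin D β) (rlin_invol D hβ)).toAffineEquiv.trans
    (AffineEquiv.constVAdd ℝ (Vr r) (((m : ℝ) * (D.p : ℝ)) • toV β))

lemma rEquiv_apply {β : Lr r} (hβ : pairZ β (D.coroot β) = 2) (m : ℤ) (v : Vr r) :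
    rEquiv D hβ m v = v - (pairR v (D.coroot β) - (m : ℝ) * (D.p : ℝ)) • toV β := by
  show ((m : ℝ) * (D.p : ℝ)) • toV β +ᵥ (v - pairR v (D.coroot β) • toV β)
      = v - (pairR v (D.coroot β) - (m : ℝ) * (D.p : ℝ)) • toV β
  rw [sub_smul]
  show ((m : ℝ) * (D.p : ℝ)) • toV β + (v - pairR v (D.coroot β) • toV β) = _
  abel

lemma rEquiv_isRefl {β : Lr r} (hβ : pairZ β (D.coroot β) = 2) (m : ℤ) :
    D.IsRefl β m (rEquiv D hβ m) := fun v => rEquiv_apply D hβ m v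

lemma rEquiv_mem {β : Lr r} (hβ : pairZ β (D.coroot β) = 2) (hpos : β ∈ D.pos) (m : ℤ) :
    rEquiv D hβ m ∈ D.Wp := by
  have h0 : rEquiv D hβ 0 ∈ D.Wp := by
    apply Subgroup.subset_closure
    left
    exact ⟨β, hpos, fun v => rEquiv_apply D hβ 0 v⟩
  have ht : AffineEquiv.constVAdd ℝ (Vr r) (((m : ℝ) * (D.p : ℝ)) • toV β) ∈ D.Wp := by
    apply Subgroup.subset_closure
    right
    refine ⟨β, hpos, m, fun v => ?_⟩
    show ((m : ℝ) * (D.p : ℝ)) • toV β +ᵥ v = v + ((m : ℝ) * (D.p : ℝ)) • toV β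
    exact add_comm _ _
  have heq : rEquiv D hβ m
      = (AffineEquiv.constVAdd ℝ (Vr r) (((m : ℝ) * (D.p : ℝ)) • toV β)) * rEquiv D hβ 0 := by
    apply AffineEquiv.ext
    intro v
    rw [AffineEquiv.coe_mul]
    simp only [Function.comp_apply]
    rw [rEquiv_apply D, rEquiv_apply D]
    simp only [AffineEquiv.constVAdd_apply, vadd_eq_add]
    push_cast
    rw [zero_mul, sub_zero, sub_smul]
    abel
  rw [heq]
  exact Subgroup.mul_mem _ ht h0

/-! ### Basic lemmas on the dot action -/

lemma dot_add_rho (g : G r) (x : Vr r) : D.dot g x + toV D.ρ = g (x + toV D.ρ) := by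
  simp [ARDatum.dot]

lemma dot_mul (g h : G r) (x : Vr r) : D.dot (g * h) x = D.dot g (D.dot h x) := by
  simp [ARDatum.dot, AffineEquiv.coe_mul]

lemma dot_one (x : Vr r) : D.dot 1 x = x := by
  simp [ARDatum.dot]

lemma dot_rEquiv {β : Lr r} (hβ : pairZ β (D.coroot β) = 2) (m : ℤ) (x : Vr r) :
    D.dot (rEquiv D hβ m) x
      = x - (pairR (x + toV D.ρ) (D.coroot β) - (m : ℝ) * (D.p : ℝ)) • toV β := by
  unfold ARDatum.dot
  rw [rEquiv_apply D]
  abel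

lemma rEquiv_sq {β : Lr r} (hβ : pairZ β (D.coroot β) = 2) (m : ℤ) :
    rEquiv D hβ m * rEquiv D hβ m = 1 := by
  apply AffineEquiv.ext
  intro v
  rw [AffineEquiv.coe_mul]
  show rEquiv D hβ m (rEquiv D hβ m v) = (1 : G r) v
  have hb : pairR (toV β) (D.coroot β) = 2 := by rw [pairR_toV, hβ]; norm_num
  rw [rEquiv_apply D, rEquiv_apply D, pairR_sub_left, pairR_smul_left, hb]
  show _ = v
  have h : (pairR v (D.coroot β) - (pairR v (D.coroot β) - (m:ℝ)*(D.p:ℝ)) * 2 - (m:ℝ)*(D.p:ℝ))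
      = -(pairR v (D.coroot β) - (m:ℝ)*(D.p:ℝ)) := by ring
  rw [h, neg_smul]
  abel
/-! ### `coroot (-δ) = - coroot δ` -/

lemma add_nsmul_mem_eq_zero (x u : Lr r) (h : ∀ n : ℕ, x + (n : ℤ) • u ∈ D.Φ) :
    u = 0 := by
  obtain ⟨a, b, hne, heq⟩ := Finite.exists_ne_map_eq_of_infinite
    (fun n : ℕ => (⟨x + (n : ℤ) • u, h n⟩ : {y // y ∈ D.Φ}))
  have h2 : x + (a : ℤ) • u = x + (b : ℤ) • u := congrArg Subtype.val heq
  have h4 : (a : ℤ) • u = (b : ℤ) • u := add_left_cancel h2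
  have h3 : ((a : ℤ) - (b : ℤ)) • u = 0 := by rw [sub_smul, h4, sub_self]
  rcases smul_eq_zero.mp h3 with h | h
  · exact absurd (by exact_mod_cast sub_eq_zero.mp h) hne
  · exact h

lemma orbit_lemma (e w x : Lr r) (hx : x ∈ D.Φ)
    (hstep : ∀ y ∈ D.Φ, y - pairZ y e • w ∈ D.Φ)
    (hew : pairZ w e = 0) :
    pairZ x e • w = 0 := by
  have horb : ∀ n : ℕ, x + (n : ℤ) • (-(pairZ x e • w)) ∈ D.Φ ∧
      pairZ (x + (n : ℤ) • (-(pairZ x e • w))) e = pairZ x e := by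
    intro n
    induction n with
    | zero =>
      refine ⟨by simpa using hx, by simp⟩
    | succ n ih =>
      obtain ⟨ih1, ih2⟩ := ih
      have h1 := hstep _ ih1
      rw [ih2] at h1
      have h2 : x + (n : ℤ) • -(pairZ x e • w) - pairZ x e • w
          = x + ((n : ℕ) + 1 : ℤ) • -(pairZ x e • w) := by
        funext i
        simp only [Pi.add_apply, Pi.sub_apply, Pi.smul_apply, Pi.neg_apply, smul_eq_mul]
        push_cast
        ring
      rw [h2] at h1
      have h2' : ((n : ℕ) + 1 : ℤ) = ((n + 1 : ℕ) : ℤ) := by push_cast; ring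
      rw [h2'] at h1
      refine ⟨h1, ?_⟩
      rw [pairZ_add_left, pairZ_smul_left, pairZ_neg_left, pairZ_smul_left, hew]
      ring
  have hz := add_nsmul_mem_eq_zero D x _ (fun n => (horb n).1)
  rwa [neg_eq_zero] at hz

lemma coroot_neg {δ : Lr r} (hδ : δ ∈ D.Φ) : D.coroot (-δ) = -D.coroot δ := by
  have hδ0 : δ ≠ 0 := D.root_ne_zero δ hδ
  have hnδ : -δ ∈ D.Φ := D.neg_mem δ hδ
  have hd2 : pairZ δ (D.coroot δ) = 2 := D.root_coroot_two δ hδ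
  have hc2 : pairZ δ (D.coroot (-δ)) = -2 := by
    have h := D.root_coroot_two (-δ) hnδ
    rw [pairZ_neg_left] at h
    omega
  set c := D.coroot (-δ) with hc
  set d := D.coroot δ with hdd
  -- the composite reflection T maps Φ into Φ
  have hT : ∀ x ∈ D.Φ, x - pairZ x (c + d) • δ ∈ D.Φ := by
    intro x hx
    have h1 := D.reflect_root_mem (-δ) hnδ x hx
    rw [smul_neg, sub_neg_eq_add] at h1
    have h2 := D.reflect_root_mem δ hδ _ h1
    have h3 : pairZ (x + pairZ x c • δ) d = pairZ x d + pairZ x c * 2 := by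
      rw [pairZ_add_left, pairZ_smul_left, hd2]
    rw [h3] at h2
    have h4 : x + pairZ x c • δ - (pairZ x d + pairZ x c * 2) • δ
        = x - pairZ x (c + d) • δ := by
      funext i
      simp only [Pi.add_apply, Pi.sub_apply, Pi.smul_apply, smul_eq_mul, pairZ_add_right]
      ring
    rwa [h4] at h2
  have hew : pairZ δ (c + d) = 0 := by rw [pairZ_add_right, hc2, hd2]; ring
  have hA : ∀ x ∈ D.Φ, pairZ x (c + d) = 0 := by
    intro x hx
    have h5 := orbit_lemma D (c + d) δ x hx hT hew
    rcases smul_eq_zero.mp h5 with h | h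
    · exact h
    · exact absurd h hδ0
  -- the root η with coroot η = c + 2d
  obtain ⟨η, hη, hηeq⟩ := D.reflect_coroot_mem δ hδ (-δ) hnδ
  have hηeq' : D.coroot η = c + (2 : ℤ) • d := by
    rw [hηeq, ← hc, ← hdd, hc2]
    funext i
    simp only [Pi.add_apply, Pi.sub_apply, Pi.smul_apply, smul_eq_mul]
    ring
  have hstepC : ∀ x ∈ D.Φ, pairZ x (D.coroot η) = pairZ x d := by
    intro x hx
    have h6 : pairZ x c + pairZ x d = 0 := by
      have := hA x hx
      rwa [pairZ_add_right] at this
    rw [hηeq', pairZ_add_right, pairZ_smul_right]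
    omega
  have hηd2 : pairZ η d = 2 := by
    have h7 := D.root_coroot_two η hη
    rw [hstepC η hη] at h7
    exact h7
  -- the composite reflection for the pair (η, δ)
  have hstepE : ∀ y ∈ D.Φ, y - pairZ y d • (η - δ) ∈ D.Φ := by
    intro y hy
    have h1 := D.reflect_root_mem η hη y hy
    rw [hstepC y hy] at h1
    have h2 := D.reflect_root_mem δ hδ _ h1
    have h3 : pairZ (y - pairZ y d • η) d = -pairZ y d := by
      rw [pairZ_sub_left, pairZ_smul_left, hηd2]
      ring
    rw [h3] at h2
    have h4 : y - pairZ y d • η - -pairZ y d • δ = y - pairZ y d • (η - δ) := by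
      funext i
      simp only [Pi.add_apply, Pi.sub_apply, Pi.smul_apply, Pi.neg_apply, smul_eq_mul]
      ring
    rwa [h4] at h2
  have hew2 : pairZ (η - δ) d = 0 := by rw [pairZ_sub_left, hηd2, hd2]; ring
  have h8 := orbit_lemma D d (η - δ) δ hδ hstepE hew2
  rw [hd2] at h8
  have hηδ : η = δ := by
    rcases smul_eq_zero.mp h8 with h | h
    · omega
    · exact sub_eq_zero.mp h
  rw [hηδ, ← hdd] at hηeq'
  funext i
  have h9 := congrFun hηeq' i
  simp only [Pi.add_apply, Pi.smul_apply, Pi.neg_apply, smul_eq_mul] at h9 ⊢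
  omega
/-! ### The regular region indexed by all roots, and its stability -/

/-- Points off every hyperplane `⟨v+ρ, coroot δ⟩ = kp`, `δ ∈ Φ`. -/
def Reg2 (D : ARDatum r) : Set (Vr r) :=
  {v | ∀ δ ∈ D.Φ, ∀ k : ℤ, pairR (v + toV D.ρ) (D.coroot δ) ≠ (k : ℝ) * (D.p : ℝ)}

lemma Reg2_stable : ∀ g ∈ D.Wp, ∀ x ∈ Reg2 D, D.dot g x ∈ Reg2 D := by
  intro g hg
  suffices h : (∀ x ∈ Reg2 D, D.dot g x ∈ Reg2 D) ∧ (∀ x ∈ Reg2 D, D.dot g⁻¹ x ∈ Reg2 D) by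
    exact h.1
  refine Subgroup.closure_induction
    (p := fun g _ => (∀ x ∈ Reg2 D, D.dot g x ∈ Reg2 D) ∧ (∀ x ∈ Reg2 D, D.dot g⁻¹ x ∈ Reg2 D))
    ?_ ?_ ?_ ?_ hg
  · rintro g (⟨γ, hγ, hlin⟩ | ⟨γ, hγ, m, htr⟩)
    · -- linear reflection case
      have hγΦ : γ ∈ D.Φ := D.pos_sub hγ
      have hfwd : ∀ x ∈ Reg2 D, D.dot g x ∈ Reg2 D := by
        intro x hx δ hδ k
        have hgx : D.dot g x + toV D.ρ
            = (x + toV D.ρ) - pairR (x + toV D.ρ) (D.coroot γ) • toV γ := by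
          rw [dot_add_rho, hlin (x + toV D.ρ)]
          norm_num
        obtain ⟨ε, hε, hεeq⟩ := D.reflect_coroot_mem γ hγΦ δ hδ
        have hval : pairR (D.dot g x + toV D.ρ) (D.coroot δ)
            = pairR (x + toV D.ρ) (D.coroot ε) := by
          rw [hgx, pairR_sub_left, pairR_smul_left, pairR_toV, hεeq,
            pairR_sub_zsmul_right]
          ring
        rw [hval]
        exact hx ε hε k
      have hγ2 : pairZ γ (D.coroot γ) = 2 := D.root_coroot_two γ hγΦ
      have hgeq : g = rEquiv D hγ2 0 := by
        apply AffineEquiv.ext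
        intro u
        rw [hlin u, rEquiv_apply]
      have hinv : g⁻¹ = g := by
        rw [hgeq]
        exact inv_eq_of_mul_eq_one_right (rEquiv_sq D hγ2 0)
      exact ⟨hfwd, by rw [hinv]; exact hfwd⟩
    · -- translation case
      have hγΦ : γ ∈ D.Φ := D.pos_sub hγ
      have key : ∀ (m' : ℤ), (∀ u, g u = u + ((m' : ℝ) * (D.p : ℝ)) • toV γ) →
          ∀ x ∈ Reg2 D, ∀ δ ∈ D.Φ, ∀ k : ℤ,
            pairR (x + toV D.ρ + ((m' : ℝ) * (D.p : ℝ)) • toV γ + toV D.ρ - toV D.ρ)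
              (D.coroot δ) ≠ (k : ℝ) * (D.p : ℝ) := by
        intro m' _ x hx δ hδ k
        have : x + toV D.ρ + ((m' : ℝ) * (D.p : ℝ)) • toV γ + toV D.ρ - toV D.ρ
            = (x + toV D.ρ) + ((m' : ℝ) * (D.p : ℝ)) • toV γ := by abel
        rw [this, pairR_add_left, pairR_smul_left, pairR_toV]
        intro hcontra
        apply hx δ hδ (k - m' * pairZ γ (D.coroot δ))
        push_cast
        linarith
      constructor
      · intro x hx δ hδ k
        have hgx : D.dot g x + toV D.ρ = (x + toV D.ρ) + ((m : ℝ) * (D.p : ℝ)) • toV γ := by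
          rw [dot_add_rho, htr]
        rw [hgx, pairR_add_left, pairR_smul_left, pairR_toV]
        intro hcontra
        apply hx δ hδ (k - m * pairZ γ (D.coroot δ))
        push_cast
        linarith
      · intro x hx δ hδ k
        have hginv : ∀ u, g⁻¹ u = u + (((-m : ℤ) : ℝ) * (D.p : ℝ)) • toV γ := by
          intro u
          have : g (u + (((-m : ℤ) : ℝ) * (D.p : ℝ)) • toV γ) = u := by
            rw [htr]
            push_cast
            have : (-(m:ℝ)) * (D.p:ℝ) = -((m:ℝ) * (D.p:ℝ)) := by ring
            rw [this, neg_smul]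
            abel
          calc g⁻¹ u = g⁻¹ (g (u + (((-m : ℤ) : ℝ) * (D.p : ℝ)) • toV γ)) := by rw [this]
          _ = u + (((-m : ℤ) : ℝ) * (D.p : ℝ)) • toV γ := by
              show (g⁻¹ * g) _ = _
              rw [inv_mul_cancel]
              rfl
        have hgx : D.dot g⁻¹ x + toV D.ρ
            = (x + toV D.ρ) + (((-m : ℤ) : ℝ) * (D.p : ℝ)) • toV γ := by
          rw [dot_add_rho, hginv]
        rw [hgx, pairR_add_left, pairR_smul_left, pairR_toV]
        intro hcontra
        apply hx δ hδ (k - (-m) * pairZ γ (D.coroot δ))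
        push_cast at hcontra ⊢
        linarith
  · constructor <;> (intro x hx; simpa [dot_one, inv_one] using hx)
  · intro a b _ _ ha hb
    constructor
    · intro x hx
      rw [dot_mul]
      exact ha.1 _ (hb.1 x hx)
    · intro x hx
      rw [mul_inv_rev, dot_mul]
      exact hb.2 _ (ha.2 x hx)
  · intro a _ ha
    exact ⟨ha.2, by simpa [inv_inv] using ha.1⟩

/-- The fundamental alcove is contained in the regular region. -/
lemma FundC_subset_Reg2 {x : Vr r} (hx : x ∈ D.FundC) : x ∈ Reg2 D := by
  have hppos : (0 : ℝ) < (D.p : ℝ) := by exact_mod_cast D.hp.pos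
  intro δ hδ k
  rcases D.pos_or_neg δ hδ with h | h
  · obtain ⟨h0, h1⟩ := hx δ h
    intro hEq
    rw [hEq] at h0 h1
    have hk0 : (0 : ℤ) < k := by
      by_contra hk
      push_neg at hk
      have : (k : ℝ) * (D.p : ℝ) ≤ 0 := by
        apply mul_nonpos_of_nonpos_of_nonneg
        · exact_mod_cast hk
        · exact hppos.le
      linarith
    have hk1 : k < 1 := by
      by_contra hk
      push_neg at hk
      have : (D.p : ℝ) ≤ (k : ℝ) * (D.p : ℝ) := by
        nlinarith [show (1:ℝ) ≤ (k:ℝ) from by exact_mod_cast hk]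
      linarith
    omega
  · obtain ⟨h0, h1⟩ := hx (-δ) h
    have hcor : D.coroot (-δ) = -D.coroot δ := coroot_neg D hδ
    rw [hcor, pairR_neg_right] at h0 h1
    intro hEq
    rw [hEq] at h0 h1
    have hk0 : (0 : ℤ) < -k := by
      by_contra hk
      push_neg at hk
      have : ((-k : ℤ) : ℝ) * (D.p : ℝ) ≤ 0 := by
        apply mul_nonpos_of_nonpos_of_nonneg
        · exact_mod_cast hk
        · exact hppos.le
      push_cast at this
      linarith
    have hk1 : -k < 1 := by
      by_contra hk
      push_neg at hk
      have : (D.p : ℝ) ≤ ((-k : ℤ) : ℝ) * (D.p : ℝ) := by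
        nlinarith [show (1:ℝ) ≤ ((-k:ℤ):ℝ) from by exact_mod_cast hk]
      push_cast at this
      linarith
    omega
/-! ### The key inequality: transfer of hyperplane position from `μ` to `λ` -/

/-- The open segment from `y·λ` to `y·μ` avoids the hyperplanes. -/
lemma segment_avoids {lam mu : Lr r} (hlam : toV lam ∈ D.FundC)
    (hmu : toV mu ∈ D.FundCBar) {y : G r} (hy : y ∈ D.Wp) {β : Lr r} (hβ : β ∈ D.pos)
    (k : ℤ) (t : ℝ) (ht0 : 0 < t) (ht1 : t < 1) :
    (1 - t) * pairR (D.dot y (toV lam) + toV D.ρ) (D.coroot β)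
      + t * pairR (D.dot y (toV mu) + toV D.ρ) (D.coroot β) ≠ (k : ℝ) * (D.p : ℝ) := by
  have hνC : toV lam + t • (toV mu - toV lam) ∈ D.FundC := by
    intro α hα
    obtain ⟨ha0, ha1⟩ := hlam α hα
    obtain ⟨hb0, hb1⟩ := hmu α hα
    have hexp : pairR (toV lam + t • (toV mu - toV lam) + toV D.ρ) (D.coroot α)
        = pairR (toV lam + toV D.ρ) (D.coroot α)
          + t * (pairR (toV mu + toV D.ρ) (D.coroot α)
            - pairR (toV lam + toV D.ρ) (D.coroot α)) := by
      have hre : toV lam + t • (toV mu - toV lam) + toV D.ρ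
          = (toV lam + toV D.ρ) + t • (toV mu - toV lam) := by abel
      rw [hre, pairR_add_left, pairR_smul_left, pairR_sub_left,
        pairR_add_left, pairR_add_left]
      ring
    constructor
    · rw [hexp]; nlinarith
    · rw [hexp]; nlinarith
  have hνreg := Reg2_stable D y hy _ (FundC_subset_Reg2 D hνC)
  have h1 : toV lam + t • (toV mu - toV lam) + toV D.ρ
      = AffineMap.lineMap (toV lam + toV D.ρ) (toV mu + toV D.ρ) t := by
    rw [AffineMap.lineMap_apply_module]
    module
  have h2 : D.dot y (toV lam + t • (toV mu - toV lam)) + toV D.ρ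
      = AffineMap.lineMap (D.dot y (toV lam) + toV D.ρ)
          (D.dot y (toV mu) + toV D.ρ) t := by
    rw [dot_add_rho, h1, dot_add_rho, dot_add_rho]
    have h3 := AffineMap.apply_lineMap (y : Vr r →ᵃ[ℝ] Vr r)
      (toV lam + toV D.ρ) (toV mu + toV D.ρ) t
    simpa using h3
  have hcompute : pairR (D.dot y (toV lam + t • (toV mu - toV lam)) + toV D.ρ)
        (D.coroot β)
      = (1 - t) * pairR (D.dot y (toV lam) + toV D.ρ) (D.coroot β)
        + t * pairR (D.dot y (toV mu) + toV D.ρ) (D.coroot β) := by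
    rw [h2, AffineMap.lineMap_apply_module, pairR_add_left, pairR_smul_left,
      pairR_smul_left]
  intro hEq
  exact hνreg β (D.pos_sub hβ) k (hcompute.trans hEq)

/-- Pure real-number part of the key inequality. -/
lemma arith_key {A B p : ℝ} (hp : 0 < p) (hAne : ∀ k : ℤ, A ≠ (k : ℝ) * p)
    (hseg : ∀ (k : ℤ) (t : ℝ), 0 < t → t < 1 → (1 - t) * A + t * B ≠ (k : ℝ) * p)
    (m : ℤ) (hB : (m : ℝ) * p < B) : (m : ℝ) * p < A := by
  set n : ℤ := ⌊A / p⌋ with hn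
  have hnle : (n : ℝ) * p < A := by
    have h := Int.floor_le (A / p)
    have h2 : (n : ℝ) * p ≤ A := by
      calc (n : ℝ) * p ≤ (A / p) * p := mul_le_mul_of_nonneg_right h hp.le
        _ = A := by field_simp
    exact lt_of_le_of_ne h2 (Ne.symm (hAne n))
  have hnlt : A < ((n : ℝ) + 1) * p := by
    have h := Int.lt_floor_add_one (A / p)
    calc A = (A / p) * p := by field_simp
      _ < ((n : ℝ) + 1) * p := by
          apply mul_lt_mul_of_pos_right _ hp
          exact_mod_cast h
  have hBle : B ≤ ((n : ℝ) + 1) * p := by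
    by_contra hgt
    push_neg at hgt
    have hBA : (0 : ℝ) < B - A := by linarith
    have ht0 : 0 < (((n : ℝ) + 1) * p - A) / (B - A) := div_pos (by linarith) hBA
    have ht1 : (((n : ℝ) + 1) * p - A) / (B - A) < 1 := (div_lt_one hBA).2 (by linarith)
    apply hseg (n + 1) _ ht0 ht1
    have hmul : (((n : ℝ) + 1) * p - A) / (B - A) * (B - A) = ((n : ℝ) + 1) * p - A :=
      div_mul_cancel₀ _ (ne_of_gt hBA)
    push_cast
    nlinarith [hmul]
  have hmn : m ≤ n := by
    have hlt : (m : ℝ) * p < ((n : ℝ) + 1) * p := lt_of_lt_of_le hB hBle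
    have hmr : (m : ℝ) < (n : ℝ) + 1 := (mul_lt_mul_iff_left₀ hp).mp hlt
    have : m < n + 1 := by exact_mod_cast hmr
    omega
  calc (m : ℝ) * p ≤ (n : ℝ) * p := by
        apply mul_le_mul_of_nonneg_right _ hp.le
        exact_mod_cast hmn
    _ < A := hnle

lemma key_ineq {lam mu : Lr r} (hlam : toV lam ∈ D.FundC) (hmu : toV mu ∈ D.FundCBar)
    {y : G r} (hy : y ∈ D.Wp) {β : Lr r} (hβ : β ∈ D.pos) (m : ℤ)
    (hB : (m : ℝ) * (D.p : ℝ) < pairR (D.dot y (toV mu) + toV D.ρ) (D.coroot β)) :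
    (m : ℝ) * (D.p : ℝ) < pairR (D.dot y (toV lam) + toV D.ρ) (D.coroot β) := by
  have hppos : (0 : ℝ) < (D.p : ℝ) := by exact_mod_cast D.hp.pos
  have hreg : D.dot y (toV lam) ∈ Reg2 D :=
    Reg2_stable D y hy _ (FundC_subset_Reg2 D hlam)
  exact arith_key hppos (fun k => hreg β (D.pos_sub hβ) k)
    (fun k t ht0 ht1 => segment_avoids D hlam hmu hy hβ k t ht0 ht1) m hB

end StmtAux
/-- If `w·λ ≺ ws·λ` and `w·μ ≺ v·μ`, then `w·λ ≺ v·λ`. -/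
theorem stmt6 {r : ℕ} (D : ARDatum r)
    (s : ARDatum.G r) (hs : s ∈ D.Sp)
    (lam mu : Lr r) (hlam : toV lam ∈ D.FundC) (hmu : toV mu ∈ D.FundCBar)
    (hmustab : ∀ g ∈ D.Wp, (D.dot g (toV mu) = toV mu ↔ g = 1 ∨ g = s))
    (hlamstab : ∀ g ∈ D.Wp, D.dot g (toV lam) = toV lam → g = 1)
    (w v : ARDatum.G r) (hw : w ∈ D.Wp) (hv : v ∈ D.Wp)
    (h1 : D.Ups (D.dot w (toV lam)) (D.dot (w * s) (toV lam)))
    (h2 : D.Ups (D.dot w (toV mu)) (D.dot v (toV mu))) :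
    D.Ups (D.dot w (toV lam)) (D.dot v (toV lam)) := by
  classical
  obtain ⟨hsWp, α, hα, mzero, hsrefl, -⟩ := hs
  have hα2 : pairZ α (D.coroot α) = 2 := D.root_coroot_two α (D.pos_sub hα)
  have hss : s * s = 1 := by
    have hseq : s = StmtAux.rEquiv D hα2 mzero := by
      apply AffineEquiv.ext
      intro u
      rw [hsrefl u, StmtAux.rEquiv_apply]
    rw [hseq]
    exact StmtAux.rEquiv_sq D hα2 mzero
  have hsμ : D.dot s (toV mu) = toV mu := (hmustab s hsWp).mpr (Or.inr rfl)
  have main : ∀ u : Vr r, D.Up (D.dot w (toV mu)) u →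
      ∃ x ∈ D.Wp, u = D.dot x (toV mu) ∧
        D.Up (D.dot w (toV lam)) (D.dot x (toV lam)) ∧
        D.Up (D.dot w (toV lam)) (D.dot (x * s) (toV lam)) := by
    intro u hu
    have hu' : Relation.ReflTransGen D.UpStep (D.dot w (toV mu)) u := hu
    clear hu
    induction hu' with
    | refl => exact ⟨w, hw, rfl, Relation.ReflTransGen.refl, h1.1⟩
    | @tail b u' hb hstep ih =>
      obtain ⟨x, hxWp, hbx, hupx, hupxs⟩ := ih
      obtain ⟨β, hβ, m, hge, hEq⟩ := hstep
      by_cases hdeg : pairR (u' + toV D.ρ) (D.coroot β) = (m : ℝ) * (D.p : ℝ)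
      · refine ⟨x, hxWp, ?_, hupx, hupxs⟩
        rw [← hbx, hEq, hdeg]
        simp
      · have hBgt : (m : ℝ) * (D.p : ℝ) < pairR (u' + toV D.ρ) (D.coroot β) :=
          lt_of_le_of_ne hge (Ne.symm hdeg)
        have hβ2 : pairZ β (D.coroot β) = 2 := D.root_coroot_two β (D.pos_sub hβ)
        set t := StmtAux.rEquiv D hβ2 m with htdef
        have htWp : t ∈ D.Wp := StmtAux.rEquiv_mem D hβ2 hβ m
        have htt : t * t = 1 := StmtAux.rEquiv_sq D hβ2 m
        have hpairb : pairR (toV β) (D.coroot β) = 2 := by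
          rw [StmtAux.pairR_toV, hβ2]
          norm_num
        have hdot_t : ∀ z : Vr r, D.dot t z
            = z - (pairR (z + toV D.ρ) (D.coroot β) - (m : ℝ) * (D.p : ℝ)) • toV β :=
          fun z => StmtAux.dot_rEquiv D hβ2 m z
        have hu'tx : u' = D.dot (t * x) (toV mu) := by
          rw [StmtAux.dot_mul, ← hbx, hEq, hdot_t]
          set B := pairR (u' + toV D.ρ) (D.coroot β) with hBd
          have hre : u' - (B - (m : ℝ) * (D.p : ℝ)) • toV β + toV D.ρ
              = (u' + toV D.ρ) - (B - (m : ℝ) * (D.p : ℝ)) • toV β := by abel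
          rw [hre, StmtAux.pairR_sub_left, StmtAux.pairR_smul_left, hpairb, ← hBd]
          have hco : B - (B - (m : ℝ) * (D.p : ℝ)) * 2 - (m : ℝ) * (D.p : ℝ)
              = -(B - (m : ℝ) * (D.p : ℝ)) := by ring
          rw [hco, neg_smul]
          abel
        have hA1 := StmtAux.key_ineq D hlam hmu (mul_mem htWp hxWp) hβ m
          (by rw [← hu'tx]; exact hBgt)
        have hstep1 : D.UpStep (D.dot x (toV lam)) (D.dot (t * x) (toV lam)) := by
          refine ⟨β, hβ, m, hA1.le, ?_⟩
          conv_lhs => rw [show x = t * (t * x) by rw [← mul_assoc, htt, one_mul],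
            StmtAux.dot_mul, hdot_t]
        have hxsμ : D.dot (t * (x * s)) (toV mu) = u' := by
          rw [StmtAux.dot_mul, StmtAux.dot_mul, hsμ, ← StmtAux.dot_mul]
          exact hu'tx.symm
        have hA2 := StmtAux.key_ineq D hlam hmu
          (mul_mem htWp (mul_mem hxWp hsWp)) hβ m (by rw [hxsμ]; exact hBgt)
        have hstep2 : D.UpStep (D.dot (x * s) (toV lam))
            (D.dot (t * (x * s)) (toV lam)) := by
          refine ⟨β, hβ, m, hA2.le, ?_⟩
          conv_lhs => rw [show x * s = t * (t * (x * s)) by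
              rw [← mul_assoc, htt, one_mul],
            StmtAux.dot_mul, hdot_t]
        refine ⟨t * x, mul_mem htWp hxWp, hu'tx,
          Relation.ReflTransGen.tail hupx hstep1, ?_⟩
        rw [mul_assoc]
        exact Relation.ReflTransGen.tail hupxs hstep2
  obtain ⟨x, hxWp, hxμ, hupx, hupxs⟩ := main _ h2.1
  have hne : D.dot w (toV lam) ≠ D.dot v (toV lam) := by
    intro hEq
    have hfix : D.dot (v⁻¹ * w) (toV lam) = toV lam := by
      rw [StmtAux.dot_mul, hEq, ← StmtAux.dot_mul, inv_mul_cancel, StmtAux.dot_one]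
    have h1' := hlamstab _ (mul_mem (inv_mem hv) hw) hfix
    have hwv : w = v := (inv_mul_eq_one.mp h1').symm
    exact h2.2 (by rw [hwv])
  have hfixμ : D.dot (v⁻¹ * x) (toV mu) = toV mu := by
    rw [StmtAux.dot_mul, ← hxμ, ← StmtAux.dot_mul, inv_mul_cancel, StmtAux.dot_one]
  rcases (hmustab _ (mul_mem (inv_mem hv) hxWp)).mp hfixμ with h | h
  · have hxv : x = v := (inv_mul_eq_one.mp h).symm
    rw [hxv] at hupx
    exact ⟨hupx, hne⟩
  · have hxvs : x = v * s := by
      have hh : v * (v⁻¹ * x) = v * s := by rw [h]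
      rwa [← mul_assoc, mul_inv_cancel, one_mul] at hh
    have hxs : x * s = v := by rw [hxvs, mul_assoc, hss, mul_one]
    rw [hxs] at hupxs
    exact ⟨hupxs, hne⟩

end
end

section
/- Let w, v ∈ W_p be such that w·λ ≺ ws·λ. If w·μ ≺ v·μ, then w·λ ≺ vs·λ. -/
noncomputable section

section Aux

variable {r : ℕ}

lemma pairZ_add_left (x y c : Lr r) : pairZ (x + y) c = pairZ x c + pairZ y c := by
  simp [pairZ, add_mul, Finset.sum_add_distrib]

lemma pairZ_zsmul_left (n : ℤ) (x c : Lr r) : pairZ (n • x) c = n * pairZ x c := by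
  simp [pairZ, Finset.mul_sum, mul_assoc]

lemma pairZ_neg_right (x c : Lr r) : pairZ x (-c) = -pairZ x c := by
  simp [pairZ]

lemma pairR_add_left (v w : Vr r) (c : Lr r) : pairR (v + w) c = pairR v c + pairR w c := by
  simp [pairR, add_mul, Finset.sum_add_distrib]

lemma pairR_sub_left (v w : Vr r) (c : Lr r) : pairR (v - w) c = pairR v c - pairR w c := by
  simp [pairR, sub_mul, Finset.sum_sub_distrib]

lemma pairR_smul_left (a : ℝ) (v : Vr r) (c : Lr r) : pairR (a • v) c = a * pairR v c := by
  simp [pairR, Finset.mul_sum, mul_assoc]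

lemma pairR_toV (x c : Lr r) : pairR (toV x) c = (pairZ x c : ℝ) := by
  simp [pairR, pairZ, toV]

lemma pairR_neg_right (v : Vr r) (c : Lr r) : pairR v (-c) = -pairR v c := by
  simp [pairR]

lemma pairR_sub_zsmul_right (v : Vr r) (c d : Lr r) (n : ℤ) :
    pairR v (c - n • d) = pairR v c - (n : ℝ) * pairR v d := by
  simp only [pairR, Pi.sub_apply, Pi.smul_apply, smul_eq_mul, Int.cast_sub, Int.cast_mul,
    mul_sub, Finset.sum_sub_distrib, Finset.mul_sum]
  congr 1
  exact Finset.sum_congr rfl (fun i _ => by ring)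

end Aux
section Aux2

variable {r : ℕ}

lemma G_mul_apply (g h : ARDatum.G r) (ξ : Vr r) : (g * h) ξ = g (h ξ) := by
  rw [AffineEquiv.coe_mul]; rfl

lemma G_one_apply (ξ : Vr r) : (1 : ARDatum.G r) ξ = ξ := rfl

lemma G_inv_apply (g : ARDatum.G r) (ξ : Vr r) : g⁻¹ (g ξ) = ξ := by
  rw [← G_mul_apply, inv_mul_cancel, G_one_apply]

lemma ARDatum.neg_coroot (D : ARDatum r) {α : Lr r} (hα : α ∈ D.Φ) :
    D.coroot (-α) = -D.coroot α := by
  obtain ⟨δ, hδΦ, hδ⟩ := D.reflect_coroot_mem α hα α hα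
  have h2 : pairZ α (D.coroot α) = 2 := D.root_coroot_two α hα
  have hδc : D.coroot δ = -D.coroot α := by
    rw [hδ, h2]; module
  have hδα : δ = -α := by
    by_contra hne
    have hσ : α + δ ≠ 0 := by
      intro h0
      exact hne (by linear_combination (norm := module) h0)
    have h2δ : pairZ δ (D.coroot δ) = 2 := D.root_coroot_two δ hδΦ
    have hδα2 : pairZ δ (D.coroot α) = -2 := by
      have h := h2δ
      rw [hδc, pairZ_neg_right] at h
      omega
    have hαδ2 : pairZ α (D.coroot δ) = -2 := by
      rw [hδc, pairZ_neg_right, h2]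
    have key : ∀ n : ℕ, (α + (n:ℤ) • (α + δ) ∈ D.Φ) ∧ (δ + (n:ℤ) • (α + δ) ∈ D.Φ) := by
      intro n
      induction n with
      | zero => simpa using ⟨hα, hδΦ⟩
      | succ n ih =>
        obtain ⟨hA, hB⟩ := ih
        constructor
        · have h := D.reflect_root_mem α hα _ hB
          have hpz : pairZ (δ + (n:ℤ) • (α + δ)) (D.coroot α) = -2 := by
            rw [pairZ_add_left, pairZ_zsmul_left, pairZ_add_left, h2, hδα2]; ring
          rw [hpz] at h
          convert h using 1
          push_cast
          module
        · have h := D.reflect_root_mem δ hδΦ _ hA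
          have hpz : pairZ (α + (n:ℤ) • (α + δ)) (D.coroot δ) = -2 := by
            rw [pairZ_add_left, pairZ_zsmul_left, pairZ_add_left, hαδ2, h2δ]; ring
          rw [hpz] at h
          convert h using 1
          push_cast
          module
    obtain ⟨i, hi⟩ : ∃ i, (α + δ) i ≠ 0 := by
      by_contra h
      push_neg at h
      exact hσ (funext h)
    have hinj : Function.Injective (fun n : ℕ => α + (n:ℤ) • (α + δ)) := by
      intro a b hab
      have h := congrFun hab i
      simp only [Pi.add_apply, Pi.smul_apply, smul_eq_mul] at h
      have hi' : α i + δ i ≠ 0 := by simpa using hi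
      have h' : (a:ℤ) * (α i + δ i) = (b:ℤ) * (α i + δ i) := by linarith
      exact_mod_cast mul_right_cancel₀ hi' h'
    exact absurd (Set.infinite_of_injective_forall_mem hinj (fun n => (key n).1))
      (D.Φ.finite_toSet).not_infinite
  rw [hδα] at hδc
  exact hδc

end Aux2
section Aux3

variable {r : ℕ}

/-- For `u ∈ W_p`, the pairing `⟨u ξ, β∨⟩` is `± ⟨ξ, γ∨⟩ + kp` for some `γ ∈ Φ⁺`. -/
def Pprop (D : ARDatum r) (u : ARDatum.G r) : Prop :=
  ∀ β ∈ D.pos, ∃ γ ∈ D.pos, ∃ ε : ℝ, (ε = 1 ∨ ε = -1) ∧ ∃ k : ℤ,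
    ∀ ξ : Vr r, pairR (u ξ) (D.coroot β) = ε * pairR ξ (D.coroot γ) + (k : ℝ) * (D.p : ℝ)

lemma Pprop_one (D : ARDatum r) : Pprop D 1 := by
  intro β hβ
  exact ⟨β, hβ, 1, Or.inl rfl, 0, fun ξ => by rw [G_one_apply]; push_cast; ring⟩

lemma Pprop_mul (D : ARDatum r) {u v : ARDatum.G r} (hu : Pprop D u) (hv : Pprop D v) :
    Pprop D (u * v) := by
  intro β hβ
  obtain ⟨γ₁, hγ₁, ε₁, hε₁, k₁, h₁⟩ := hu β hβ
  obtain ⟨γ₂, hγ₂, ε₂, hε₂, k₂, h₂⟩ := hv γ₁ hγ₁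
  rcases hε₁ with rfl | rfl
  · refine ⟨γ₂, hγ₂, ε₂, hε₂, k₂ + k₁, fun ξ => ?_⟩
    rw [G_mul_apply, h₁, h₂]
    push_cast; ring
  · refine ⟨γ₂, hγ₂, -ε₂, ?_, k₁ - k₂, fun ξ => ?_⟩
    · rcases hε₂ with rfl | rfl
      · exact Or.inr (by norm_num)
      · exact Or.inl (by norm_num)
    · rw [G_mul_apply, h₁, h₂]
      push_cast; ring

lemma Pprop_linRefl (D : ARDatum r) {α : Lr r} {g : ARDatum.G r}
    (hα : α ∈ D.pos) (hg : D.IsLinRefl α g) : Pprop D g := by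
  intro β hβ
  obtain ⟨δ, hδΦ, hδ⟩ := D.reflect_coroot_mem α (D.pos_sub hα) β (D.pos_sub hβ)
  have key : ∀ ξ : Vr r, pairR (g ξ) (D.coroot β) = pairR ξ (D.coroot δ) := by
    intro ξ
    rw [hg ξ, hδ, pairR_sub_zsmul_right, pairR_sub_left, pairR_smul_left, pairR_toV]
    push_cast; ring
  rcases D.pos_or_neg δ hδΦ with h | h
  · exact ⟨δ, h, 1, Or.inl rfl, 0, fun ξ => by rw [key ξ]; push_cast; ring⟩
  · refine ⟨-δ, h, -1, Or.inr rfl, 0, fun ξ => ?_⟩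
    rw [key ξ, ARDatum.neg_coroot D hδΦ, pairR_neg_right]
    push_cast; ring

lemma Pprop_transl (D : ARDatum r) {α : Lr r} {m : ℤ} {g : ARDatum.G r}
    (hα : α ∈ D.pos) (hg : D.IsTransl α m g) : Pprop D g := by
  intro β hβ
  refine ⟨β, hβ, 1, Or.inl rfl, m * pairZ α (D.coroot β), fun ξ => ?_⟩
  rw [hg ξ, pairR_add_left, pairR_smul_left, pairR_toV]
  push_cast; ring

lemma isRefl_invol (D : ARDatum r) {α : Lr r} {m : ℤ} {g : ARDatum.G r}
    (hαΦ : α ∈ D.Φ) (hg : D.IsRefl α m g) : ∀ ξ : Vr r, g (g ξ) = ξ := by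
  have h2 : pairR (toV α) (D.coroot α) = 2 := by
    rw [pairR_toV, D.root_coroot_two α hαΦ]; norm_num
  intro ξ
  rw [hg, hg, pairR_sub_left, pairR_smul_left, h2]
  funext i
  simp only [Pi.sub_apply, Pi.smul_apply, smul_eq_mul]
  ring

lemma isRefl_inv (D : ARDatum r) {α : Lr r} {m : ℤ} {g : ARDatum.G r}
    (hαΦ : α ∈ D.Φ) (hg : D.IsRefl α m g) : D.IsRefl α m g⁻¹ := by
  intro ξ
  have h : g⁻¹ ξ = g ξ := by
    conv_lhs => rw [← isRefl_invol D hαΦ hg ξ]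
    rw [G_inv_apply]
  rw [h, hg]

lemma isTransl_inv (D : ARDatum r) {α : Lr r} {m : ℤ} {g : ARDatum.G r}
    (hg : D.IsTransl α m g) : D.IsTransl α (-m) g⁻¹ := by
  intro ξ
  have h : g (ξ + (((-m : ℤ) : ℝ) * (D.p : ℝ)) • toV α) = ξ := by
    rw [hg]
    funext i
    simp only [Pi.add_apply, Pi.smul_apply, smul_eq_mul]
    push_cast; ring
  conv_lhs => rw [← h, G_inv_apply]

lemma Pprop_of_Wp (D : ARDatum r) {u : ARDatum.G r} (hu : u ∈ D.Wp) : Pprop D u := by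
  refine (Subgroup.closure_induction
    (p := fun g _ => Pprop D g ∧ Pprop D g⁻¹) ?_ ?_ ?_ ?_ hu).1
  · rintro g (⟨α, hα, hg⟩ | ⟨α, hα, m, hg⟩)
    · exact ⟨Pprop_linRefl D hα hg,
        Pprop_linRefl D hα (isRefl_inv D (D.pos_sub hα) hg)⟩
    · exact ⟨Pprop_transl D hα hg, Pprop_transl D hα (isTransl_inv D hg)⟩
  · exact ⟨Pprop_one D, by rw [inv_one]; exact Pprop_one D⟩
  · rintro x y hx hy ⟨hx1, hx2⟩ ⟨hy1, hy2⟩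
    exact ⟨Pprop_mul D hx1 hy1, by rw [mul_inv_rev]; exact Pprop_mul D hy2 hx2⟩
  · rintro x hx ⟨hp1, hp2⟩
    exact ⟨hp2, by rw [inv_inv]; exact hp1⟩

end Aux3
section Aux4

variable {r : ℕ}

lemma dot_add_rho (D : ARDatum r) (g : ARDatum.G r) (x : Vr r) :
    D.dot g x + toV D.ρ = g (x + toV D.ρ) := by
  unfold ARDatum.dot; abel

lemma dot_mul (D : ARDatum r) (g h : ARDatum.G r) (x : Vr r) :
    D.dot (g * h) x = D.dot g (D.dot h x) := by
  unfold ARDatum.dot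
  rw [G_mul_apply]
  congr 1
  congr 1
  abel

lemma dot_inv_dot (D : ARDatum r) (g : ARDatum.G r) (x : Vr r) :
    D.dot g⁻¹ (D.dot g x) = x := by
  unfold ARDatum.dot
  rw [sub_add_cancel, G_inv_apply]
  abel

lemma key_bound (D : ARDatum r) {lam mu : Lr r} (hlam : toV lam ∈ D.FundC)
    (hmu : toV mu ∈ D.FundCBar) {u : ARDatum.G r} (hu : u ∈ D.Wp) {β : Lr r}
    (hβ : β ∈ D.pos) {m : ℤ}
    (h : pairR (D.dot u (toV mu) + toV D.ρ) (D.coroot β) < (m : ℝ) * (D.p : ℝ)) :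
    pairR (D.dot u (toV lam) + toV D.ρ) (D.coroot β) ≤ (m : ℝ) * (D.p : ℝ) := by
  obtain ⟨γ, hγ, ε, hε, k, hk⟩ := Pprop_of_Wp D hu β hβ
  rw [dot_add_rho, hk] at h
  rw [dot_add_rho, hk]
  have hμ := hmu γ hγ
  have hLam := hlam γ hγ
  have hp0 : (0 : ℝ) < (D.p : ℝ) := by exact_mod_cast D.hp.pos
  rcases hε with rfl | rfl
  · have hkm : (k : ℝ) < (m : ℝ) := by nlinarith [hμ.1]
    have hkm' : (k : ℤ) + 1 ≤ m := by
      have : k < m := by exact_mod_cast hkm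
      omega
    have hle : ((k : ℝ) + 1) * (D.p : ℝ) ≤ (m : ℝ) * (D.p : ℝ) := by
      have : ((k : ℝ) + 1) ≤ (m : ℝ) := by exact_mod_cast hkm'
      nlinarith
    nlinarith [hLam.2]
  · have hkm : (k : ℝ) < (m : ℝ) + 1 := by nlinarith [hμ.2]
    have hkm' : k ≤ m := by
      have : k < m + 1 := by exact_mod_cast hkm
      omega
    have hle : (k : ℝ) * (D.p : ℝ) ≤ (m : ℝ) * (D.p : ℝ) := by
      have : (k : ℝ) ≤ (m : ℝ) := by exact_mod_cast hkm'
      nlinarith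
    nlinarith [hLam.1]

/-- The functional `v ↦ ⟨v, c⟩` as a linear map. -/
def pairL (c : Lr r) : Vr r →ₗ[ℝ] ℝ where
  toFun v := pairR v c
  map_add' v w := pairR_add_left v w c
  map_smul' a v := by simpa using pairR_smul_left a v c

/-- The linear reflection `v ↦ v - ⟨v,c⟩ • b`. -/
def rlin (b : Vr r) (c : Lr r) : Vr r →ₗ[ℝ] Vr r := LinearMap.id - (pairL c).smulRight b

lemma rlin_apply (b : Vr r) (c : Lr r) (v : Vr r) : rlin b c v = v - pairR v c • b := rfl

lemma rlin_invol (b : Vr r) (c : Lr r) (h2 : pairR b c = 2) :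
    Function.Involutive (rlin b c) := by
  intro v
  rw [rlin_apply, rlin_apply, pairR_sub_left, pairR_smul_left, h2]
  funext i
  simp only [Pi.sub_apply, Pi.smul_apply, smul_eq_mul]
  ring

lemma exists_refl_mem_Wp (D : ARDatum r) {β : Lr r} (hβ : β ∈ D.pos) (m : ℤ) :
    ∃ g : ARDatum.G r, g ∈ D.Wp ∧ D.IsRefl β m g := by
  have h2 : pairR (toV β) (D.coroot β) = 2 := by
    rw [pairR_toV, D.root_coroot_two β (D.pos_sub hβ)]; norm_num
  set sβ : ARDatum.G r :=
    (LinearEquiv.ofInvolutive (rlin (toV β) (D.coroot β)) (rlin_invol _ _ h2)).toAffineEquiv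
    with hsβ
  have hsβ_app : ∀ ξ : Vr r, sβ ξ = ξ - pairR ξ (D.coroot β) • toV β := fun ξ => rfl
  set tβ : ARDatum.G r :=
    AffineEquiv.constVAdd ℝ (Vr r) (((m : ℝ) * (D.p : ℝ)) • toV β) with htβ
  have htβ_app : ∀ ξ : Vr r, tβ ξ = ((m : ℝ) * (D.p : ℝ)) • toV β + ξ := fun ξ => rfl
  refine ⟨tβ * sβ, ?_, ?_⟩
  · refine Subgroup.mul_mem _ ?_ ?_
    · refine Subgroup.subset_closure (Or.inr ⟨β, hβ, m, fun ξ => ?_⟩)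
      rw [htβ_app]; abel
    · refine Subgroup.subset_closure (Or.inl ⟨β, hβ, fun ξ => ?_⟩)
      rw [hsβ_app]
      norm_num
  · intro ξ
    rw [G_mul_apply, hsβ_app, htβ_app]
    funext i
    simp only [Pi.sub_apply, Pi.add_apply, Pi.smul_apply, smul_eq_mul]
    ring

lemma dot_refl_apply (D : ARDatum r) {β : Lr r} {m : ℤ} {g : ARDatum.G r}
    (hg : D.IsRefl β m g) (x : Vr r) :
    D.dot g x = x - (pairR (x + toV D.ρ) (D.coroot β) - (m : ℝ) * (D.p : ℝ)) • toV β := by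
  unfold ARDatum.dot
  rw [hg (x + toV D.ρ)]
  abel

lemma dot_refl_val (D : ARDatum r) {β : Lr r} {m : ℤ} {g : ARDatum.G r}
    (hβΦ : β ∈ D.Φ) (hg : D.IsRefl β m g) (x : Vr r) :
    pairR (D.dot g x + toV D.ρ) (D.coroot β)
      = 2 * ((m : ℝ) * (D.p : ℝ)) - pairR (x + toV D.ρ) (D.coroot β) := by
  have h2 : pairR (toV β) (D.coroot β) = 2 := by
    rw [pairR_toV, D.root_coroot_two β hβΦ]; norm_num
  rw [dot_refl_apply D hg]
  have hre : x - (pairR (x + toV D.ρ) (D.coroot β) - (m : ℝ) * (D.p : ℝ)) • toV β + toV D.ρ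
      = (x + toV D.ρ) - (pairR (x + toV D.ρ) (D.coroot β) - (m : ℝ) * (D.p : ℝ)) • toV β := by
    abel
  rw [hre, pairR_sub_left, pairR_smul_left, h2]
  ring

end Aux4

/-- If `w·λ ≺ ws·λ` and `w·μ ≺ v·μ`, then `w·λ ≺ vs·λ`. -/
theorem stmt7 {r : ℕ} (D : ARDatum r)
    (s : ARDatum.G r) (hs : s ∈ D.Sp)
    (lam mu : Lr r) (hlam : toV lam ∈ D.FundC) (hmu : toV mu ∈ D.FundCBar)
    (hmustab : ∀ g ∈ D.Wp, (D.dot g (toV mu) = toV mu ↔ g = 1 ∨ g = s))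
    (hlamstab : ∀ g ∈ D.Wp, D.dot g (toV lam) = toV lam → g = 1)
    (w v : ARDatum.G r) (hw : w ∈ D.Wp) (hv : v ∈ D.Wp)
    (h1 : D.Ups (D.dot w (toV lam)) (D.dot (w * s) (toV lam)))
    (h2 : D.Ups (D.dot w (toV mu)) (D.dot v (toV mu))) :
    D.Ups (D.dot w (toV lam)) (D.dot (v * s) (toV lam)) := by
  obtain ⟨hsWp, α₀, hα₀, m₀, hrefl₀, -⟩ := hs
  have hss : s * s = 1 := by
    refine AffineEquiv.ext fun ξ => ?_
    rw [G_mul_apply, G_one_apply]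
    exact isRefl_invol D (D.pos_sub hα₀) hrefl₀ ξ
  have hsmu : D.dot s (toV mu) = toV mu := (hmustab s hsWp).mpr (Or.inr rfl)
  -- the key invariant, propagated up the chain from w·μ
  have key : ∀ x : Vr r, Relation.ReflTransGen D.UpStep (D.dot w (toV mu)) x →
      ∃ u : ARDatum.G r, u ∈ D.Wp ∧ x = D.dot u (toV mu) ∧
        D.Up (D.dot w (toV lam)) (D.dot u (toV lam)) ∧
        D.Up (D.dot w (toV lam)) (D.dot (u * s) (toV lam)) := by
    intro x hx
    induction hx with
    | refl => exact ⟨w, hw, rfl, Relation.ReflTransGen.refl, h1.1⟩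
    | @tail b c hab hbc ih =>
      obtain ⟨u, huWp, hb, hU1, hU2⟩ := ih
      obtain ⟨β, hβ, m, hm, hceq⟩ := hbc
      have hβΦ : β ∈ D.Φ := D.pos_sub hβ
      have h2β : pairR (toV β) (D.coroot β) = 2 := by
        rw [pairR_toV, D.root_coroot_two β hβΦ]; norm_num
      -- the value of β on b
      have hvalb : pairR (b + toV D.ρ) (D.coroot β)
          = 2 * ((m : ℝ) * (D.p : ℝ)) - pairR (c + toV D.ρ) (D.coroot β) := by
        rw [hceq]
        have hre : c - (pairR (c + toV D.ρ) (D.coroot β) - (m : ℝ) * (D.p : ℝ)) • toV β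
              + toV D.ρ
            = (c + toV D.ρ)
              - (pairR (c + toV D.ρ) (D.coroot β) - (m : ℝ) * (D.p : ℝ)) • toV β := by
          abel
        rw [hre, pairR_sub_left, pairR_smul_left, h2β]
        ring
      have hble : pairR (b + toV D.ρ) (D.coroot β) ≤ (m : ℝ) * (D.p : ℝ) := by
        rw [hvalb]; linarith
      obtain ⟨g, hgWp, hgRefl⟩ := exists_refl_mem_Wp D hβ m
      have hcb : c = D.dot g b := by
        rw [dot_refl_apply D hgRefl, hvalb, hceq]
        funext i
        simp only [Pi.sub_apply, Pi.smul_apply, smul_eq_mul]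
        ring
      rcases eq_or_lt_of_le hble with heq | hlt
      · -- b lies on the hyperplane: the step is trivial, b = c
        have hbc' : b = c := by
          have hcm : pairR (c + toV D.ρ) (D.coroot β) = (m : ℝ) * (D.p : ℝ) := by
            rw [hvalb] at heq; linarith
          rw [hceq, hcm]
          funext i
          simp only [Pi.sub_apply, Pi.smul_apply, smul_eq_mul]
          ring
        exact ⟨u, huWp, hbc' ▸ hb, hU1, hU2⟩
      · -- genuine step: cross the wall with g
        have husWp : u * s ∈ D.Wp := Subgroup.mul_mem _ huWp hsWp
        have husmu : D.dot (u * s) (toV mu) = b := by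
          rw [dot_mul, hsmu, ← hb]
        have hub : D.dot u (toV mu) = b := hb.symm
        -- bounds on the values of λ
        have hbound1 : pairR (D.dot u (toV lam) + toV D.ρ) (D.coroot β)
            ≤ (m : ℝ) * (D.p : ℝ) :=
          key_bound D hlam hmu huWp hβ (by rw [hub]; exact hlt)
        have hbound2 : pairR (D.dot (u * s) (toV lam) + toV D.ρ) (D.coroot β)
            ≤ (m : ℝ) * (D.p : ℝ) :=
          key_bound D hlam hmu husWp hβ (by rw [husmu]; exact hlt)
        -- the two up-steps
        have step : ∀ u' : ARDatum.G r,
            pairR (D.dot u' (toV lam) + toV D.ρ) (D.coroot β) ≤ (m : ℝ) * (D.p : ℝ) →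
            D.UpStep (D.dot u' (toV lam)) (D.dot (g * u') (toV lam)) := by
          intro u' hu'
          refine ⟨β, hβ, m, ?_, ?_⟩
          · rw [dot_mul, dot_refl_val D hβΦ hgRefl]
            linarith
          · rw [dot_mul, dot_refl_val D hβΦ hgRefl, dot_refl_apply D hgRefl]
            funext i
            simp only [Pi.sub_apply, Pi.smul_apply, smul_eq_mul]
            ring
        refine ⟨g * u, Subgroup.mul_mem _ hgWp huWp, ?_, ?_, ?_⟩
        · rw [dot_mul, ← hb]; exact hcb
        · exact hU1.tail (step u hbound1)
        · rw [mul_assoc]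
          exact hU2.tail (step (u * s) hbound2)
  obtain ⟨u, huWp, hbeq, hU1, hU2⟩ := key _ h2.1
  -- identify v with u or u * s
  have hg₀Wp : u⁻¹ * v ∈ D.Wp := Subgroup.mul_mem _ (Subgroup.inv_mem _ huWp) hv
  have hg₀fix : D.dot (u⁻¹ * v) (toV mu) = toV mu := by
    rw [dot_mul, hbeq, dot_inv_dot]
  have hne : D.dot w (toV lam) ≠ D.dot (v * s) (toV lam) := by
    intro heq
    have hvsWp : v * s ∈ D.Wp := Subgroup.mul_mem _ hv hsWp
    have hfix : D.dot ((v * s)⁻¹ * w) (toV lam) = toV lam := by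
      rw [dot_mul, heq, dot_inv_dot]
    have h1' := hlamstab _ (Subgroup.mul_mem _ (Subgroup.inv_mem _ hvsWp) hw) hfix
    have hw' : w = v * s := (inv_mul_eq_one.mp h1').symm
    have hv' : v = w * s := by rw [hw', mul_assoc, hss, mul_one]
    have hcontra : D.dot v (toV mu) = D.dot w (toV mu) := by
      rw [hv', dot_mul, hsmu]
    exact h2.2 hcontra.symm
  rcases (hmustab _ hg₀Wp).mp hg₀fix with h | h
  · have hvu : v = u := by
      have := inv_mul_eq_one.mp h
      exact this.symm
    refine ⟨?_, hne⟩
    rw [hvu]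
    exact hU2
  · have hvu : v = u * s := by rw [← h, mul_inv_cancel_left]
    have hvsu : v * s = u := by rw [hvu, mul_assoc, hss, mul_one]
    refine ⟨?_, hne⟩
    rw [hvsu]
    exact hU1

end
end

section
/- Let λ ∈ X, let w ∈ W_p, and let t ∈ W_p be any reflection. Then wt·λ < w·λ (in the order ≤) if and only if wt·λ ≺ w·λ (in the order ⪯). -/
noncomputable section

namespace ARQ

open ARDatum

variable {r : ℕ}

theorem toV_add (x y : Lr r) : toV (x + y) = toV x + toV y := by
  funext i; simp [toV]

theorem toV_sub (x y : Lr r) : toV (x - y) = toV x - toV y := by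
  funext i; simp [toV]

theorem toV_neg (x : Lr r) : toV (-x) = -toV x := by
  funext i; simp [toV]

theorem toV_zsmul (c : ℤ) (x : Lr r) : toV (c • x) = (c : ℝ) • toV x := by
  funext i; simp [toV]

theorem toV_inj {x y : Lr r} (h : toV x = toV y) : x = y := by
  funext i
  have := congrFun h i
  simp only [toV] at this
  exact_mod_cast this

theorem toV_sum {β : Type*} (S : Finset β) (f : β → Lr r) :
    toV (∑ s ∈ S, f s) = ∑ s ∈ S, toV (f s) := by
  funext i; simp [toV]

theorem pairR_toV (x y : Lr r) : pairR (toV x) y = (pairZ x y : ℝ) := by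
  simp [pairR, pairZ, toV]

theorem pairZ_add_left (x y z : Lr r) : pairZ (x + y) z = pairZ x z + pairZ y z := by
  simp [pairZ, add_mul, Finset.sum_add_distrib]

theorem pairZ_sub_left (x y z : Lr r) : pairZ (x - y) z = pairZ x z - pairZ y z := by
  simp [pairZ, sub_mul, Finset.sum_sub_distrib]

theorem pairZ_zsmul_left (c : ℤ) (x z : Lr r) : pairZ (c • x) z = c * pairZ x z := by
  simp [pairZ, Finset.mul_sum, mul_assoc]

theorem pairZ_neg_left (x z : Lr r) : pairZ (-x) z = -pairZ x z := by
  simp [pairZ, Finset.sum_neg_distrib]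

theorem pairZ_sub_right (x y z : Lr r) : pairZ x (y - z) = pairZ x y - pairZ x z := by
  simp [pairZ, mul_sub, Finset.sum_sub_distrib]

theorem pairZ_neg_right (x z : Lr r) : pairZ x (-z) = -pairZ x z := by
  simp [pairZ, Finset.sum_neg_distrib]

theorem pairZ_zsmul_right (c : ℤ) (x z : Lr r) : pairZ x (c • z) = c * pairZ x z := by
  simp [pairZ, Finset.mul_sum]; ring_nf
  simp [mul_comm, mul_left_comm]

theorem pairR_add_left (v w : Vr r) (y : Lr r) : pairR (v + w) y = pairR v y + pairR w y := by
  simp [pairR, add_mul, Finset.sum_add_distrib]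

theorem pairR_sub_left (v w : Vr r) (y : Lr r) : pairR (v - w) y = pairR v y - pairR w y := by
  simp [pairR, sub_mul, Finset.sum_sub_distrib]

theorem pairR_smul_left (c : ℝ) (v : Vr r) (y : Lr r) : pairR (c • v) y = c * pairR v y := by
  simp [pairR, Finset.mul_sum, mul_assoc]

end ARQ
namespace ARQ

open ARDatum

variable {r : ℕ} (D : ARDatum r)

/-- The lattice-level reflection `s_a`. -/
def sL (a x : Lr r) : Lr r := x - pairZ x (D.coroot a) • a

theorem sL_mem {a x : Lr r} (ha : a ∈ D.Φ) (hx : x ∈ D.Φ) : sL D a x ∈ D.Φ :=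
  D.reflect_root_mem a ha x hx

/-- Full coroot equivariance: `coroot (s_α γ) = coroot γ − ⟨α, γ∨⟩ • coroot α`. -/
theorem coroot_reflect {a g : Lr r} (ha : a ∈ D.Φ) (hg : g ∈ D.Φ) :
    D.coroot (sL D a g) = D.coroot g - pairZ a (D.coroot g) • D.coroot a := by
  classical
  obtain ⟨δ, hδΦ, hδ⟩ : ∃ δ ∈ D.Φ, D.coroot δ = D.coroot g - pairZ a (D.coroot g) • D.coroot a := by
    obtain ⟨δ, hδΦ, hδ⟩ := D.reflect_coroot_mem a ha g hg
    exact ⟨δ, hδΦ, hδ⟩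
  have hμΦ : sL D a g ∈ D.Φ := sL_mem D ha hg
  set z : Lr r := D.coroot g - pairZ a (D.coroot g) • D.coroot a with hzdef
  set μ : Lr r := sL D a g with hμdef
  have haa : pairZ a (D.coroot a) = 2 := D.root_coroot_two a ha
  have hgg : pairZ g (D.coroot g) = 2 := D.root_coroot_two g hg
  have hxz : ∀ x : Lr r, pairZ x z
      = pairZ x (D.coroot g) - pairZ a (D.coroot g) * pairZ x (D.coroot a) := by
    intro x
    rw [hzdef, pairZ_sub_right, pairZ_zsmul_right]
  have hμz : pairZ μ z = 2 := by
    rw [hxz, hμdef, sL, pairZ_sub_left, pairZ_zsmul_left, pairZ_sub_left, pairZ_zsmul_left,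
      haa, hgg]
    ring
  have hδz : pairZ δ z = 2 := by rw [← hδ]; exact D.root_coroot_two δ hδΦ
  have hr : ∀ x ∈ D.Φ, x - pairZ x z • μ ∈ D.Φ := by
    intro x hx
    have key : sL D a (sL D g (sL D a x)) = x - pairZ x z • μ := by
      rw [hxz, hμdef]
      simp only [sL, pairZ_sub_left, pairZ_zsmul_left, haa, hgg]
      module
    rw [← key]
    exact sL_mem D ha (sL_mem D hg (sL_mem D ha hx))
  suffices hδμ : δ = μ by rw [← hδμ, hδ]
  by_contra hne
  have hstep : ∀ x : Lr r, x ∈ D.Φ → pairZ x z = 2 →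
      (x - (2:ℤ) • (δ - μ) ∈ D.Φ ∧ pairZ (x - (2:ℤ) • (δ - μ)) z = 2) := by
    intro x hx hx2
    refine ⟨?_, ?_⟩
    · have h1 : x - (2:ℤ) • δ ∈ D.Φ := by
        have e1 : sL D δ x = x - (2:ℤ) • δ := by rw [sL, hδ, hx2]
        rw [← e1]; exact sL_mem D hδΦ hx
      have h2 := hr _ h1
      have hpz : pairZ (x - (2:ℤ) • δ) z = -2 := by
        rw [pairZ_sub_left, pairZ_zsmul_left, hδz, hx2]; ring
      rw [hpz] at h2
      have e2 : x - (2:ℤ) • δ - (-2 : ℤ) • μ = x - (2:ℤ) • (δ - μ) := by module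
      rwa [e2] at h2
    · rw [pairZ_sub_left, pairZ_zsmul_left, pairZ_sub_left, hδz, hμz, hx2]; ring
  have hiter : ∀ n : ℕ, δ - (2 * (n:ℤ)) • (δ - μ) ∈ D.Φ
      ∧ pairZ (δ - (2 * (n:ℤ)) • (δ - μ)) z = 2 := by
    intro n
    induction n with
    | zero => constructor <;> simp [hδΦ, hδz]
    | succ k ih =>
      have h := hstep _ ih.1 ih.2
      have e3 : δ - (2 * (k:ℤ)) • (δ - μ) - (2:ℤ) • (δ - μ)
          = δ - (2 * ((k:ℤ) + 1)) • (δ - μ) := by module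
      rw [e3] at h
      have : ((k:ℤ) + 1) = ((k + 1 : ℕ) : ℤ) := by push_cast; ring
      rwa [this] at h
  have hinj : Function.Injective (fun n : ℕ => δ - (2 * (n:ℤ)) • (δ - μ)) := by
    intro n1 n2 h
    simp only at h
    have h2 := sub_right_injective h
    have h3 : (2 * (n1:ℤ) - 2 * (n2:ℤ)) • (δ - μ) = 0 := by
      rw [sub_smul, h2, sub_self]
    rcases smul_eq_zero.mp h3 with h4 | h4
    · omega
    · exact absurd h4 (sub_ne_zero.mpr hne)
  exact absurd (Set.infinite_of_injective_forall_mem hinj fun n => (hiter n).1)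
    (Set.not_infinite.mpr D.Φ.finite_toSet)

/-- `coroot (−γ) = −coroot γ`. -/
theorem coroot_neg {g : Lr r} (hg : g ∈ D.Φ) : D.coroot (-g) = -D.coroot g := by
  have hng : -g ∈ D.Φ := D.neg_mem g hg
  have h := coroot_reflect D hg hng
  have hgg : pairZ g (D.coroot g) = 2 := D.root_coroot_two g hg
  have hngng : pairZ (-g) (D.coroot (-g)) = 2 := D.root_coroot_two (-g) hng
  have hpn : pairZ g (D.coroot (-g)) = -2 := by
    rw [pairZ_neg_left] at hngng; omega
  have e1 : sL D g (-g) = g := by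
    rw [sL, pairZ_neg_left, hgg]
    module
  rw [e1, hpn] at h
  -- h : coroot g = coroot (-g) - (-2) • coroot g
  rw [neg_smul, sub_neg_eq_add] at h
  have h3 : D.coroot g - (2:ℤ) • D.coroot g = D.coroot (-g) := sub_eq_iff_eq_add.mpr h
  rw [← h3]; module

end ARQ
namespace ARQ

open ARDatum

variable {r : ℕ} (D : ARDatum r)

/-- Invariant satisfied by all elements of `W_p`. -/
def Inv (g : G r) : Prop :=
  (∀ x : Lr r, ∃ x' : Lr r, g (toV x) = toV x') ∧
  ∀ γ ∈ D.Φ, ∃ δ ∈ D.Φ,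
    (∀ z : Vr r, ∀ c : ℝ, g (z + c • toV γ) = g z + c • toV δ) ∧
    (∀ x : Lr r, ∃ n : ℤ, pairR (g (toV x)) (D.coroot δ)
        = pairR (toV x) (D.coroot γ) + (n : ℝ) * (D.p : ℝ))

theorem inv_one : Inv D (1 : G r) := by
  constructor
  · intro x; exact ⟨x, rfl⟩
  · intro γ hγ
    exact ⟨γ, hγ, fun z c => rfl, fun x => ⟨0, by simp⟩⟩

theorem inv_mul {g h : G r} (hg : Inv D g) (hh : Inv D h) : Inv D (g * h) := by
  obtain ⟨hg1, hg2⟩ := hg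
  obtain ⟨hh1, hh2⟩ := hh
  constructor
  · intro x
    obtain ⟨x1, hx1⟩ := hh1 x
    obtain ⟨x2, hx2⟩ := hg1 x1
    exact ⟨x2, by show g (h (toV x)) = _; rw [hx1, hx2]⟩
  · intro γ hγ
    obtain ⟨δ1, hδ1Φ, hlin1, hcong1⟩ := hh2 γ hγ
    obtain ⟨δ2, hδ2Φ, hlin2, hcong2⟩ := hg2 δ1 hδ1Φ
    refine ⟨δ2, hδ2Φ, ?_, ?_⟩
    · intro z c
      show g (h (z + c • toV γ)) = g (h z) + c • toV δ2
      rw [hlin1 z c, hlin2 (h z) c]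
    · intro x
      obtain ⟨x1, hx1⟩ := hh1 x
      obtain ⟨n1, hn1⟩ := hcong1 x
      obtain ⟨n2, hn2⟩ := hcong2 x1
      refine ⟨n1 + n2, ?_⟩
      show pairR (g (h (toV x))) (D.coroot δ2) = _
      rw [hx1, hn2, ← hx1, hn1]
      push_cast
      ring

/-- A linear reflection generator satisfies the invariant. -/
theorem inv_linRefl {a : Lr r} (ha : a ∈ D.Φ) {g : G r} (hg : D.IsLinRefl a g) :
    Inv D g := by
  have haa : pairZ a (D.coroot a) = 2 := D.root_coroot_two a ha
  have happ : ∀ x : Lr r, g (toV x) = toV (sL D a x) := by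
    intro x
    rw [hg (toV x)]
    rw [sL, toV_sub, toV_zsmul, pairR_toV]
    push_cast
    ring_nf
  constructor
  · intro x; exact ⟨sL D a x, happ x⟩
  · intro γ hγ
    refine ⟨sL D a γ, sL_mem D ha hγ, ?_, ?_⟩
    · intro z c
      rw [hg (z + c • toV γ), hg z]
      rw [sL, toV_sub, toV_zsmul, pairR_add_left, pairR_smul_left, pairR_toV]
      push_cast
      module
    · intro x
      refine ⟨0, ?_⟩
      rw [happ x, pairR_toV, pairR_toV, coroot_reflect D ha hγ]
      rw [sL, pairZ_sub_left, pairZ_zsmul_left, pairZ_sub_right, pairZ_zsmul_right,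
        pairZ_sub_right, pairZ_zsmul_right, haa]
      push_cast
      ring

/-- A translation generator satisfies the invariant. -/
theorem inv_transl {a : Lr r} (ha : a ∈ D.Φ) {m : ℤ} {g : G r} (hg : D.IsTransl a m g) :
    Inv D g := by
  have happ : ∀ x : Lr r, g (toV x) = toV (x + (m * (D.p : ℤ)) • a) := by
    intro x
    rw [hg (toV x), toV_add, toV_zsmul]
    push_cast
    ring_nf
  constructor
  · intro x; exact ⟨_, happ x⟩
  · intro γ hγ
    refine ⟨γ, hγ, ?_, ?_⟩
    · intro z c
      rw [hg (z + c • toV γ), hg z]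
      module
    · intro x
      refine ⟨m * pairZ a (D.coroot γ), ?_⟩
      rw [happ x, pairR_toV, pairR_toV, pairZ_add_left, pairZ_zsmul_left]
      push_cast
      ring

theorem isLinRefl_inv_self {a : Lr r} (ha : a ∈ D.Φ) {g : G r} (hg : D.IsLinRefl a g) :
    g⁻¹ = g := by
  have haa : pairR (toV a) (D.coroot a) = 2 := by
    rw [pairR_toV, D.root_coroot_two a ha]; norm_num
  have : g * g = 1 := by
    apply AffineEquiv.ext
    intro v
    show g (g v) = v
    rw [hg v, hg _]
    rw [pairR_sub_left, pairR_smul_left, haa]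
    push_cast
    module
  exact inv_eq_of_mul_eq_one_left this

theorem isTransl_inv {a : Lr r} {m : ℤ} {g : G r} (hg : D.IsTransl a m g) :
    D.IsTransl a (-m) g⁻¹ := by
  intro v
  have h1 : g (g⁻¹ v) = v := g.apply_symm_apply v
  have h2 := hg (g⁻¹ v)
  rw [h2] at h1
  have h3 : (g⁻¹ : G r) v = v - ((m:ℝ) * (D.p:ℝ)) • toV a := eq_sub_of_add_eq h1
  rw [h3]
  push_cast
  module

theorem inv_of_mem_Wp {g : G r} (hg : g ∈ D.Wp) : Inv D g := by
  have key : Inv D g ∧ Inv D g⁻¹ := by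
    induction hg using Subgroup.closure_induction with
    | mem y hy =>
      rcases hy with ⟨a, hapos, hrefl⟩ | ⟨a, hapos, m, htr⟩
      · have haΦ := D.pos_sub hapos
        have h1 := inv_linRefl D haΦ hrefl
        refine ⟨h1, ?_⟩
        rw [isLinRefl_inv_self D haΦ hrefl]
        exact h1
      · have haΦ := D.pos_sub hapos
        exact ⟨inv_transl D haΦ htr, inv_transl D haΦ (isTransl_inv D htr)⟩
    | one => exact ⟨inv_one D, by rw [_root_.inv_one]; exact inv_one D⟩
    | mul x y _ _ hx hy =>
      exact ⟨inv_mul D hx.1 hy.1, by rw [mul_inv_rev]; exact inv_mul D hy.2 hx.2⟩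
    | inv x _ hx => exact ⟨hx.2, by rw [inv_inv]; exact hx.1⟩
  exact key.1

end ARQ
namespace ARQ

open ARDatum

variable {r : ℕ} (D : ARDatum r)

theorem pp_pos : (0:ℤ) < (D.p : ℤ) := by exact_mod_cast D.hp.pos

/-- A single up-step at a lattice point, subtracting `k•β`. -/
theorem upStep_lattice (U : Lr r) {β : Lr r} (hβ : β ∈ D.pos) (k : ℤ) (hk : 0 ≤ k)
    (hcong : (D.p : ℤ) ∣ (pairZ (U + D.ρ) (D.coroot β) - k)) :
    D.UpStep (toV (U - k • β)) (toV U) := by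
  obtain ⟨m, hm⟩ := hcong
  rw [mul_comm] at hm
  have hP : pairR (toV U + toV D.ρ) (D.coroot β) = ((pairZ (U + D.ρ) (D.coroot β) : ℤ) : ℝ) := by
    rw [← toV_add, pairR_toV]
  refine ⟨β, hβ, m, ?_, ?_⟩
  · rw [hP]
    have : (m:ℤ) * (D.p:ℤ) ≤ pairZ (U + D.ρ) (D.coroot β) := by omega
    exact_mod_cast this
  · rw [hP, toV_sub, toV_zsmul]
    congr 1
    have : (pairZ (U + D.ρ) (D.coroot β) : ℝ) - (m:ℝ) * (D.p:ℝ) = (k:ℝ) := by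
      exact_mod_cast congrArg (fun t : ℤ => (t:ℝ)) (by omega : pairZ (U + D.ρ) (D.coroot β) - m * (D.p:ℤ) = k)
    rw [this]

/-- Two up-steps subtracting a total of `k•β`, for any `p ∣ k`, `k ≥ 0`. -/
theorem up_two_steps (U : Lr r) {β : Lr r} (hβ : β ∈ D.pos) (k : ℤ) (hk : 0 ≤ k)
    (hdvd : (D.p : ℤ) ∣ k) : D.Up (toV (U - k • β)) (toV U) := by
  rcases eq_or_lt_of_le hk with h0 | hkpos
  · rw [← h0]; simp only [zero_smul, sub_zero]; exact Relation.ReflTransGen.refl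
  have hp := pp_pos D
  set P := pairZ (U + D.ρ) (D.coroot β) with hPdef
  set q := P % (D.p : ℤ) with hq
  have hq0 : 0 ≤ q := Int.emod_nonneg P (by omega)
  have hqlt : q < (D.p : ℤ) := Int.emod_lt_of_pos P hp
  have hkp : (D.p:ℤ) ≤ k := Int.le_of_dvd hkpos hdvd
  have h5 : (D.p:ℤ) ∣ P - q := Int.dvd_self_sub_of_emod_eq hq.symm
  -- step 1 : subtract q • β
  have hstep1 : D.UpStep (toV (U - q • β)) (toV U) := by
    apply upStep_lattice D U hβ q hq0
    exact h5
  -- step 2 : subtract (k - q) • β from U - q•β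
  have hbb : pairZ β (D.coroot β) = 2 := D.root_coroot_two β (D.pos_sub hβ)
  have hstep2 : D.UpStep (toV (U - q • β - (k - q) • β)) (toV (U - q • β)) := by
    apply upStep_lattice D _ hβ (k - q) (by omega)
    have : pairZ (U - q • β + D.ρ) (D.coroot β) = P - 2 * q := by
      rw [show U - q • β + D.ρ = (U + D.ρ) - q • β by abel, pairZ_sub_left, pairZ_zsmul_left,
        hbb, ← hPdef]
      ring
    rw [this]
    have e6 : (P - 2*q) - (k - q) = (P - q) - k := by ring
    rw [e6]
    exact dvd_sub h5 hdvd
  have heq : U - q • β - (k - q) • β = U - k • β := by module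
  rw [heq] at hstep2
  exact (Relation.ReflTransGen.single hstep2).trans (Relation.ReflTransGen.single hstep1)

end ARQ
namespace ARQ

open ARDatum

variable {r : ℕ} (D : ARDatum r)

/-- Chain of up-steps subtracting `p`-divisible amounts of several positive roots. -/
theorem up_chain (S : Finset (Lr r)) (hS : ∀ s ∈ S, s ∈ D.pos) (c : Lr r → ℤ)
    (hc : ∀ s ∈ S, 0 ≤ c s ∧ (D.p:ℤ) ∣ c s) :
    ∀ U : Lr r, D.Up (toV (U - ∑ s ∈ S, c s • s)) (toV U) := by
  classical
  induction S using Finset.induction with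
  | empty => intro U; simp only [Finset.sum_empty, sub_zero]; exact Relation.ReflTransGen.refl
  | insert s S' hnotmem ih =>
    intro U
    have h1 : D.Up (toV (U - c s • s)) (toV U) :=
      up_two_steps D U (hS s (Finset.mem_insert_self s S')) (c s)
        (hc s (Finset.mem_insert_self s S')).1 (hc s (Finset.mem_insert_self s S')).2
    have h2 : D.Up (toV ((U - c s • s) - ∑ x ∈ S', c x • x)) (toV (U - c s • s)) :=
      ih (fun x hx => hS x (Finset.mem_insert_of_mem hx))
        (fun x hx => hc x (Finset.mem_insert_of_mem hx)) (U - c s • s)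
    have e : (U - c s • s) - ∑ x ∈ S', c x • x = U - ∑ x ∈ insert s S', c x • x := by
      rw [Finset.sum_insert hnotmem]; abel
    rw [e] at h2
    exact h2.trans h1

/-- Going up from a lattice point stays in the lattice and the difference is a
`ℕ`-combination of simple roots. -/
theorem up_to_cone {v : Vr r} {U : Lr r} (h : D.Up v (toV U)) :
    ∃ V : Lr r, toV V = v ∧ ∃ c : Lr r → ℕ,
      toV U - v = ∑ s ∈ D.simples, (c s : ℝ) • toV s := by
  classical
  induction h using Relation.ReflTransGen.head_induction_on with
  | refl =>
    exact ⟨U, rfl, 0, by simp⟩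
  | head hstep _ ih =>
    rename_i x y _
    obtain ⟨Y, hY, cc, hcc⟩ := ih
    obtain ⟨β, hβ, m, hge, hx⟩ := hstep
    have hP : pairR (y + toV D.ρ) (D.coroot β) = ((pairZ (Y + D.ρ) (D.coroot β) : ℤ) : ℝ) := by
      rw [← hY, ← toV_add, pairR_toV]
    set k : ℤ := pairZ (Y + D.ρ) (D.coroot β) - m * D.p with hk
    have hk0 : 0 ≤ k := by
      rw [hP] at hge
      have : (m:ℝ) * (D.p:ℝ) ≤ ((pairZ (Y + D.ρ) (D.coroot β) : ℤ) : ℝ) := hge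
      have h2 : ((m * D.p : ℤ) : ℝ) ≤ ((pairZ (Y + D.ρ) (D.coroot β) : ℤ) : ℝ) := by
        push_cast; linarith
      have h3 : (m * (D.p:ℤ)) ≤ pairZ (Y + D.ρ) (D.coroot β) := by exact_mod_cast h2
      omega
    have hxeq : x = toV (Y - k • β) := by
      rw [hx, hP, hY.symm, toV_sub, toV_zsmul]
      norm_cast
    obtain ⟨e, he⟩ := D.pos_sum_simples β hβ
    have heV : toV β = ∑ s ∈ D.simples, ((e s : ℤ) : ℝ) • toV s := by
      rw [he, toV_sum]
      refine Finset.sum_congr rfl fun s _ => ?_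
      rw [toV_zsmul]
    refine ⟨Y - k • β, hxeq.symm, fun s => cc s + k.toNat * e s, ?_⟩
    have : toV U - x = (toV U - y) + (k:ℝ) • toV β := by
      rw [hxeq, hY.symm, toV_sub, toV_zsmul]; abel
    rw [this, hcc, heV, Finset.smul_sum, ← Finset.sum_add_distrib]
    refine Finset.sum_congr rfl fun s _ => ?_
    rw [smul_smul, ← add_smul]
    congr 1
    have : ((k.toNat : ℤ) : ℝ) = (k : ℝ) := by
      rw [Int.toNat_of_nonneg hk0]
    push_cast
    rw [← this]
    push_cast
    ring

end ARQ
/-- For `λ ∈ X`, `w ∈ W_p` and any reflection `t ∈ W_p`: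
`wt·λ < w·λ` (in `≤`) if and only if `wt·λ ≺ w·λ` (in `⪯`). -/
theorem stmt15 {r : ℕ} (D : ARDatum r)
    (lam : Lr r)
    (w : ARDatum.G r) (hw : w ∈ D.Wp)
    (t : ARDatum.G r) (ht : t ∈ D.Wp) (htr : D.IsReflection t) :
    D.Lt (D.dot (w * t) (toV lam)) (D.dot w (toV lam)) ↔
      D.Ups (D.dot (w * t) (toV lam)) (D.dot w (toV lam)) := by
  classical
  obtain ⟨α, hαpos, m, hrefl⟩ := htr
  have hαΦ : α ∈ D.Φ := D.pos_sub hαpos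
  obtain ⟨hlat, hroots⟩ := ARQ.inv_of_mem_Wp D hw
  obtain ⟨δ, hδΦ, hlin, hcong⟩ := hroots α hαΦ
  obtain ⟨x', hx'⟩ := hlat (lam + D.ρ)
  obtain ⟨n, hn⟩ := hcong (lam + D.ρ)
  set u := D.dot w (toV lam) with hu_def
  set v := D.dot (w * t) (toV lam) with hv_def
  set c0 : ℤ := pairZ (lam + D.ρ) (D.coroot α) - m * (D.p : ℤ) with hc0
  have hdotw : u = w (toV (lam + D.ρ)) - toV D.ρ := by
    rw [hu_def, ARDatum.dot, ARQ.toV_add]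
  have hdotwt : v = w (t (toV (lam + D.ρ))) - toV D.ρ := by
    rw [hv_def, ARDatum.dot, ARQ.toV_add]; rfl
  have hT : t (toV (lam + D.ρ)) = toV (lam + D.ρ) + (-(c0:ℝ)) • toV α := by
    rw [hrefl (toV (lam + D.ρ)), ARQ.pairR_toV]
    simp only [hc0]
    push_cast
    module
  have hv : v = u - (c0:ℝ) • toV δ := by
    rw [hdotwt, hT, hlin (toV (lam + D.ρ)) (-(c0:ℝ)), hdotw]
    module
  set Ul : Lr r := x' - D.ρ with hUl
  have hu : u = toV Ul := by rw [hdotw, hx', hUl, ARQ.toV_sub]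
  have hUlx : Ul + D.ρ = x' := by rw [hUl]; abel
  have hnZ : pairZ x' (D.coroot δ) = pairZ (lam + D.ρ) (D.coroot α) + n * (D.p:ℤ) := by
    rw [hx'] at hn
    rw [ARQ.pairR_toV, ARQ.pairR_toV] at hn
    exact_mod_cast hn
  obtain ⟨β, hβpos, K, hvK, hPK⟩ :
      ∃ β ∈ D.pos, ∃ K : ℤ, v = u - (K:ℝ) • toV β ∧
        (D.p:ℤ) ∣ pairZ (Ul + D.ρ) (D.coroot β) - K := by
    by_cases hδpos : δ ∈ D.pos
    · refine ⟨δ, hδpos, c0, hv, ?_⟩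
      rw [hUlx, hnZ]
      exact ⟨n + m, by simp only [hc0]; ring⟩
    · have hneg : -δ ∈ D.pos := (D.pos_or_neg δ hδΦ).resolve_left hδpos
      refine ⟨-δ, hneg, -c0, ?_, ?_⟩
      · rw [hv, ARQ.toV_neg]
        push_cast
        module
      · rw [hUlx, ARQ.coroot_neg D hδΦ, ARQ.pairZ_neg_right, hnZ]
        exact ⟨-(n + m), by simp only [hc0]; ring⟩
  constructor
  · rintro ⟨⟨cc, hcc⟩, hne⟩
    have hK0 : K ≠ 0 := by
      intro h0
      exact hne (by rw [hvK, h0]; simp)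
    refine ⟨?_, hne⟩
    rcases lt_or_gt_of_ne hK0 with hKneg | hKpos
    · -- K < 0 : one big step down along β then a p-divisible chain along the simples
      have hKcone : (K:ℝ) • toV β = ∑ s ∈ D.simples, ((cc s : ℕ):ℝ) • toV s := by
        have h1 : u - v = (K:ℝ) • toV β := by rw [hvK]; abel
        rw [← h1, hcc]
      set L : ℤ := (-K) * ((D.p:ℤ) - 1) with hL
      have hp1 : (1:ℤ) ≤ (D.p:ℤ) := by have := ARQ.pp_pos D; omega
      have hL0 : 0 ≤ L := mul_nonneg (by omega) (by omega)
      have hstepA : D.UpStep (toV (Ul - L • β)) (toV Ul) := by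
        apply ARQ.upStep_lattice D Ul hβpos L hL0
        have e : pairZ (Ul + D.ρ) (D.coroot β) - L
            = (pairZ (Ul + D.ρ) (D.coroot β) - K) + (D.p:ℤ) * K := by
          simp only [hL]; ring
        rw [e]
        exact dvd_add hPK (dvd_mul_right _ _)
      have hchain : D.Up (toV ((Ul - L • β) - ∑ s ∈ D.simples, ((D.p:ℤ) * (cc s : ℤ)) • s))
          (toV (Ul - L • β)) := by
        apply ARQ.up_chain D D.simples (fun s hs => D.simples_sub hs)
        intro s hs
        exact ⟨by positivity, dvd_mul_right _ _⟩
      have hsum : toV (∑ s ∈ D.simples, ((D.p:ℤ) * (cc s : ℤ)) • s)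
          = (D.p:ℝ) • ((K:ℝ) • toV β) := by
        rw [ARQ.toV_sum, hKcone, Finset.smul_sum]
        refine Finset.sum_congr rfl fun s _ => ?_
        rw [ARQ.toV_zsmul, smul_smul]
        push_cast
        ring_nf
      have hscal : ((L:ℝ)) • toV β + ((D.p:ℝ) * (K:ℝ)) • toV β = (K:ℝ) • toV β := by
        rw [← add_smul]
        congr 1
        have : L + (D.p:ℤ) * K = K := by simp only [hL]; ring
        exact_mod_cast this
      have hend : toV ((Ul - L • β) - ∑ s ∈ D.simples, ((D.p:ℤ) * (cc s : ℤ)) • s) = v := by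
        rw [ARQ.toV_sub, ARQ.toV_sub, ARQ.toV_zsmul, hsum, hvK, hu, smul_smul, ← hscal]
        module
      rw [hend] at hchain
      rw [hu]
      exact hchain.trans (Relation.ReflTransGen.single hstepA)
    · -- K > 0 : a single step
      have hstep : D.UpStep (toV (Ul - K • β)) (toV Ul) :=
        ARQ.upStep_lattice D Ul hβpos K hKpos.le hPK
      have hend : toV (Ul - K • β) = v := by
        rw [ARQ.toV_sub, ARQ.toV_zsmul, ← hu, hvK]
      rw [hend] at hstep
      rw [hu]
      exact Relation.ReflTransGen.single hstep
  · rintro ⟨hup, hne⟩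
    rw [hu] at hup
    obtain ⟨V, hV, cc, hcone⟩ := ARQ.up_to_cone D hup
    refine ⟨⟨cc, ?_⟩, hne⟩
    rw [hu, hcone]

end
end
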